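/- arXiv:2601.12821 — 5 statements merged into one kernel-verified Lean document; each statement's English description precedes it below -/
import Mathlib

section
/- For the 2D Lamé operator L_{λ,μ} and x ≠ 0, the columnwise application of L_{λ,μ} to the matrix-valued function ln|x| · |x|² I₂ equals (λ+5μ) I₂ + (2λ+6μ) ln|x| I₂ + (2λ+2μ) (x xᵀ)/|x|². -/
noncomputable def pd1 (f : ℝ × ℝ → ℝ) (x : ℝ × ℝ) : ℝ := deriv (fun t => f (t, x.2)) x.1
noncomputable def pd2 (f : ℝ × ℝ → ℝ) (x : ℝ × ℝ) : ℝ := deriv (fun t => f (x.1, t)) x.2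
noncomputable def lap (f : ℝ × ℝ → ℝ) (x : ℝ × ℝ) : ℝ := pd1 (pd1 f) x + pd2 (pd2 f) x

/-- The 2D Lamé operator `L u = μ Δu + (λ+μ) ∇(∇·u)` applied to a vector field. -/
noncomputable def lame (l m : ℝ) (u : ℝ × ℝ → ℝ × ℝ) (x : ℝ × ℝ) : ℝ × ℝ :=
  (m * lap (fun y => (u y).1) x +
     (l + m) * pd1 (fun y => pd1 (fun z => (u z).1) y + pd2 (fun z => (u z).2) y) x,
   m * lap (fun y => (u y).2) x +
     (l + m) * pd2 (fun y => pd1 (fun z => (u z).1) y + pd2 (fun z => (u z).2) y) x)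

noncomputable def nrm (x : ℝ × ℝ) : ℝ := Real.sqrt (x.1 ^ 2 + x.2 ^ 2)

noncomputable def gf : ℝ × ℝ → ℝ := fun y => Real.log (nrm y) * (y.1 ^ 2 + y.2 ^ 2)

lemma sq_pos' {a b : ℝ} (h : ((a, b) : ℝ × ℝ) ≠ 0) : 0 < a ^ 2 + b ^ 2 := by
  have : a ≠ 0 ∨ b ≠ 0 := by
    by_contra hc
    push_neg at hc
    exact h (by simp [Prod.ext_iff, hc.1, hc.2])
  rcases this with h' | h' <;> positivity

lemma hasDerivAt_L1 (c a : ℝ) (h : a ^ 2 + c ^ 2 ≠ 0) :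
    HasDerivAt (fun t => Real.log (t ^ 2 + c ^ 2)) (2 * a / (a ^ 2 + c ^ 2)) a := by
  have h1 : HasDerivAt (fun t : ℝ => t ^ 2 + c ^ 2) (2 * a) a := by
    simpa using (hasDerivAt_pow 2 a).add_const (c ^ 2)
  simpa [div_eq_inv_mul, Function.comp_def] using (Real.hasDerivAt_log h).comp a h1

lemma hasDerivAt_L2 (c a : ℝ) (h : c ^ 2 + a ^ 2 ≠ 0) :
    HasDerivAt (fun t => Real.log (c ^ 2 + t ^ 2)) (2 * a / (c ^ 2 + a ^ 2)) a := by
  have h1 : HasDerivAt (fun t : ℝ => c ^ 2 + t ^ 2) (2 * a) a := by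
    simpa using (hasDerivAt_pow 2 a).const_add (c ^ 2)
  simpa [div_eq_inv_mul, Function.comp_def] using (Real.hasDerivAt_log h).comp a h1

lemma gf_slice1 (b : ℝ) :
    (fun t => gf (t, b)) = fun t => Real.log (t ^ 2 + b ^ 2) / 2 * (t ^ 2 + b ^ 2) := by
  funext t
  simp only [gf, nrm]
  rw [Real.log_sqrt (by positivity)]

lemma gf_slice2 (a : ℝ) :
    (fun t => gf (a, t)) = fun t => Real.log (a ^ 2 + t ^ 2) / 2 * (a ^ 2 + t ^ 2) := by
  funext t
  simp only [gf, nrm]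
  rw [Real.log_sqrt (by positivity)]

lemma pd1_gf (a b : ℝ) (h : ((a, b) : ℝ × ℝ) ≠ 0) :
    pd1 gf (a, b) = a * (Real.log (a ^ 2 + b ^ 2) + 1) := by
  have hs := (sq_pos' h).ne'
  have h1 : HasDerivAt (fun t : ℝ => t ^ 2 + b ^ 2) (2 * a) a := by
    simpa using (hasDerivAt_pow 2 a).add_const (b ^ 2)
  have h2 := ((hasDerivAt_L1 b a hs).div_const 2).mul h1
  have h3 : HasDerivAt (fun t => gf (t, b)) (a * (Real.log (a ^ 2 + b ^ 2) + 1)) a := by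
    rw [gf_slice1]
    refine h2.congr_deriv ?_
    field_simp
    ring
  simpa [pd1] using h3.deriv

lemma pd2_gf (a b : ℝ) (h : ((a, b) : ℝ × ℝ) ≠ 0) :
    pd2 gf (a, b) = b * (Real.log (a ^ 2 + b ^ 2) + 1) := by
  have hs := (sq_pos' h).ne'
  have h1 : HasDerivAt (fun t : ℝ => a ^ 2 + t ^ 2) (2 * b) b := by
    simpa using (hasDerivAt_pow 2 b).const_add (a ^ 2)
  have h2 := ((hasDerivAt_L2 a b hs).div_const 2).mul h1
  have h3 : HasDerivAt (fun t => gf (a, t)) (b * (Real.log (a ^ 2 + b ^ 2) + 1)) b := by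
    rw [gf_slice2]
    refine h2.congr_deriv ?_
    field_simp
    ring
  simpa [pd2] using h3.deriv

lemma ev1 {a b : ℝ} (h : ((a, b) : ℝ × ℝ) ≠ 0) :
    ∀ᶠ t in nhds a, ((t, b) : ℝ × ℝ) ≠ 0 := by
  have hopen : IsOpen {t : ℝ | ((t, b) : ℝ × ℝ) ≠ 0} :=
    isOpen_compl_singleton.preimage (continuous_id.prodMk continuous_const)
  exact hopen.mem_nhds h

lemma ev2 {a b : ℝ} (h : ((a, b) : ℝ × ℝ) ≠ 0) :
    ∀ᶠ t in nhds b, ((a, t) : ℝ × ℝ) ≠ 0 := by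
  have hopen : IsOpen {t : ℝ | ((a, t) : ℝ × ℝ) ≠ 0} :=
    isOpen_compl_singleton.preimage (continuous_const.prodMk continuous_id)
  exact hopen.mem_nhds h

lemma pd1_pd1_gf (a b : ℝ) (h : ((a, b) : ℝ × ℝ) ≠ 0) :
    pd1 (pd1 gf) (a, b) = Real.log (a ^ 2 + b ^ 2) + 1 + 2 * a ^ 2 / (a ^ 2 + b ^ 2) := by
  have hs := (sq_pos' h).ne'
  have ev : (fun t => pd1 gf (t, b)) =ᶠ[nhds a] fun t => t * (Real.log (t ^ 2 + b ^ 2) + 1) := by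
    filter_upwards [ev1 h] with t ht using pd1_gf t b ht
  have hd : HasDerivAt (fun t => t * (Real.log (t ^ 2 + b ^ 2) + 1))
      (Real.log (a ^ 2 + b ^ 2) + 1 + 2 * a ^ 2 / (a ^ 2 + b ^ 2)) a := by
    have := (hasDerivAt_id a).mul ((hasDerivAt_L1 b a hs).add_const 1)
    refine this.congr_deriv ?_
    simp only [id_eq]
    field_simp
  show deriv (fun t => pd1 gf (t, b)) a = _
  rw [ev.deriv_eq, hd.deriv]

lemma pd2_pd2_gf (a b : ℝ) (h : ((a, b) : ℝ × ℝ) ≠ 0) :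
    pd2 (pd2 gf) (a, b) = Real.log (a ^ 2 + b ^ 2) + 1 + 2 * b ^ 2 / (a ^ 2 + b ^ 2) := by
  have hs := (sq_pos' h).ne'
  have ev : (fun t => pd2 gf (a, t)) =ᶠ[nhds b] fun t => t * (Real.log (a ^ 2 + t ^ 2) + 1) := by
    filter_upwards [ev2 h] with t ht using pd2_gf a t ht
  have hd : HasDerivAt (fun t => t * (Real.log (a ^ 2 + t ^ 2) + 1))
      (Real.log (a ^ 2 + b ^ 2) + 1 + 2 * b ^ 2 / (a ^ 2 + b ^ 2)) b := by
    have := (hasDerivAt_id b).mul ((hasDerivAt_L2 a b hs).add_const 1)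
    refine this.congr_deriv ?_
    simp only [id_eq]
    field_simp
  show deriv (fun t => pd2 gf (a, t)) b = _
  rw [ev.deriv_eq, hd.deriv]

lemma pd2_pd1_gf (a b : ℝ) (h : ((a, b) : ℝ × ℝ) ≠ 0) :
    pd2 (pd1 gf) (a, b) = 2 * a * b / (a ^ 2 + b ^ 2) := by
  have hs := (sq_pos' h).ne'
  have ev : (fun t => pd1 gf (a, t)) =ᶠ[nhds b] fun t => a * (Real.log (a ^ 2 + t ^ 2) + 1) := by
    filter_upwards [ev2 h] with t ht using pd1_gf a t ht
  have hd : HasDerivAt (fun t => a * (Real.log (a ^ 2 + t ^ 2) + 1))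
      (2 * a * b / (a ^ 2 + b ^ 2)) b := by
    have := ((hasDerivAt_L2 a b hs).add_const 1).const_mul a
    refine this.congr_deriv ?_
    ring
  show deriv (fun t => pd1 gf (a, t)) b = _
  rw [ev.deriv_eq, hd.deriv]

lemma pd1_pd2_gf (a b : ℝ) (h : ((a, b) : ℝ × ℝ) ≠ 0) :
    pd1 (pd2 gf) (a, b) = 2 * a * b / (a ^ 2 + b ^ 2) := by
  have hs := (sq_pos' h).ne'
  have ev : (fun t => pd2 gf (t, b)) =ᶠ[nhds a] fun t => b * (Real.log (t ^ 2 + b ^ 2) + 1) := by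
    filter_upwards [ev1 h] with t ht using pd2_gf t b ht
  have hd : HasDerivAt (fun t => b * (Real.log (t ^ 2 + b ^ 2) + 1))
      (2 * a * b / (a ^ 2 + b ^ 2)) a := by
    have := ((hasDerivAt_L1 b a hs).add_const 1).const_mul b
    refine this.congr_deriv ?_
    ring
  show deriv (fun t => pd2 gf (t, b)) a = _
  rw [ev.deriv_eq, hd.deriv]

lemma pd1_zero (y : ℝ × ℝ) : pd1 (fun _ => (0 : ℝ)) y = 0 := by simp [pd1]
lemma pd2_zero (y : ℝ × ℝ) : pd2 (fun _ => (0 : ℝ)) y = 0 := by simp [pd2]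

/-- `L_{λ,μ}(ln|x| |x|² I₂) = (λ+5μ) I₂ + (2λ+6μ) ln|x| I₂ + (2λ+2μ) x xᵀ/|x|²`, columnwise. -/
theorem lame_log_normSq_id (l m : ℝ) (x : ℝ × ℝ) (hx : x ≠ 0) :
    lame l m (fun y => (Real.log (nrm y) * (y.1 ^ 2 + y.2 ^ 2), 0)) x =
      ((l + 5 * m) + (2 * l + 6 * m) * Real.log (nrm x)
          + (2 * l + 2 * m) * (x.1 * x.1) / (x.1 ^ 2 + x.2 ^ 2),
        (2 * l + 2 * m) * (x.2 * x.1) / (x.1 ^ 2 + x.2 ^ 2)) ∧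
    lame l m (fun y => (0, Real.log (nrm y) * (y.1 ^ 2 + y.2 ^ 2))) x =
      ((2 * l + 2 * m) * (x.1 * x.2) / (x.1 ^ 2 + x.2 ^ 2),
        (l + 5 * m) + (2 * l + 6 * m) * Real.log (nrm x)
          + (2 * l + 2 * m) * (x.2 * x.2) / (x.1 ^ 2 + x.2 ^ 2)) := by
  obtain ⟨a, b⟩ := x
  have hs := (sq_pos' hx).ne'
  have hgf : (fun y : ℝ × ℝ => Real.log (nrm y) * (y.1 ^ 2 + y.2 ^ 2)) = gf := rfl
  have hnrm : Real.log (nrm (a, b)) = Real.log (a ^ 2 + b ^ 2) / 2 := by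
    simp only [nrm]
    exact Real.log_sqrt (by positivity)
  have hz1 : (fun y : ℝ × ℝ => pd1 gf y + pd2 (fun _ => (0 : ℝ)) y) = pd1 gf := by
    funext y; simp [pd2_zero]
  have hz2 : (fun y : ℝ × ℝ => pd1 (fun _ => (0 : ℝ)) y + pd2 gf y) = pd2 gf := by
    funext y; simp [pd1_zero]
  have hlapz : lap (fun _ => (0 : ℝ)) (a, b) = 0 := by simp [lap, pd1, pd2]
  constructor
  · simp only [lame, lap, hgf]
    rw [hz1]
    have hA : (fun y : ℝ × ℝ => pd1 (fun _ : ℝ × ℝ => (0:ℝ)) y) = fun _ => (0:ℝ) := by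
      funext y; exact pd1_zero y
    have hB : (fun y : ℝ × ℝ => pd2 (fun _ : ℝ × ℝ => (0:ℝ)) y) = fun _ => (0:ℝ) := by
      funext y; exact pd2_zero y
    rw [pd1_pd1_gf a b hx, pd2_pd2_gf a b hx, pd2_pd1_gf a b hx]
    simp only [Prod.mk.injEq, hnrm]
    constructor
    · field_simp
      ring
    · simp [pd1, pd2]
      field_simp
  · simp only [lame, lap, hgf]
    rw [hz2]
    rw [pd1_pd1_gf a b hx, pd2_pd2_gf a b hx, pd1_pd2_gf a b hx]
    simp only [Prod.mk.injEq, hnrm]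
    constructor
    · simp [pd1, pd2]
      field_simp
    · field_simp
      ring
end

section
/- For the 2D Lamé operator L_{λ,μ} and x ≠ 0, the columnwise application of L_{λ,μ} to the matrix-valued function ln|x| · x xᵀ equals (λ+μ) I₂ + (3λ+5μ) ln|x| I₂ + (3λ+7μ) (x xᵀ)/|x|². -/
set_option maxHeartbeats 1600000


/- Auxiliary material -/

noncomputable def G11 (y : ℝ × ℝ) : ℝ := Real.log (y.1^2 + y.2^2) * (y.1 * y.1) / 2
noncomputable def G21 (y : ℝ × ℝ) : ℝ := Real.log (y.1^2 + y.2^2) * (y.2 * y.1) / 2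
noncomputable def G22 (y : ℝ × ℝ) : ℝ := Real.log (y.1^2 + y.2^2) * (y.2 * y.2) / 2

lemma hq1 (c t : ℝ) : HasDerivAt (fun u : ℝ => u^2 + c) (2*t) t := by
  simpa using (hasDerivAt_pow 2 t).add_const c

lemma hq2 (c t : ℝ) : HasDerivAt (fun u : ℝ => c + u^2) (2*t) t := by
  simpa using (hasDerivAt_pow 2 t).const_add c

lemma hlog1 (c t : ℝ) (h : t^2 + c ≠ 0) :
    HasDerivAt (fun u : ℝ => Real.log (u^2 + c)) (2*t/(t^2+c)) t := by
  have := (Real.hasDerivAt_log h).comp t (hq1 c t)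
  simpa [Function.comp_def, div_eq_inv_mul] using this

lemma hlog2 (c t : ℝ) (h : c + t^2 ≠ 0) :
    HasDerivAt (fun u : ℝ => Real.log (c + u^2)) (2*t/(c+t^2)) t := by
  have := (Real.hasDerivAt_log h).comp t (hq2 c t)
  simpa [Function.comp_def, div_eq_inv_mul] using this

lemma pd1_G11 (a b : ℝ) (h : a^2 + b^2 ≠ 0) :
    pd1 G11 (a, b) = a^3/(a^2+b^2) + a * Real.log (a^2+b^2) := by
  have e : (fun t => G11 (t, b)) = fun t : ℝ => Real.log (t^2 + b^2) * (t * t) / 2 := rfl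
  have H := ((hlog1 (b^2) a h).mul ((hasDerivAt_id a).mul (hasDerivAt_id a))).div_const 2
  exact (H.deriv).trans (by simp only [id, Pi.mul_apply]; field_simp; ring)

lemma pd2_G11 (a b : ℝ) (h : a^2 + b^2 ≠ 0) :
    pd2 G11 (a, b) = b * a^2/(a^2+b^2) := by
  have H := ((hlog2 (a^2) b h).mul_const (a*a)).div_const 2
  exact (H.deriv).trans (by field_simp)

lemma pd1_G21 (a b : ℝ) (h : a^2 + b^2 ≠ 0) :
    pd1 G21 (a, b) = a^2*b/(a^2+b^2) + b/2 * Real.log (a^2+b^2) := by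
  have H := ((hlog1 (b^2) a h).mul ((hasDerivAt_id a).const_mul b)).div_const 2
  exact (H.deriv).trans (by simp only [id, Pi.mul_apply]; field_simp)

lemma pd2_G21 (a b : ℝ) (h : a^2 + b^2 ≠ 0) :
    pd2 G21 (a, b) = b^2*a/(a^2+b^2) + a/2 * Real.log (a^2+b^2) := by
  have H := ((hlog2 (a^2) b h).mul ((hasDerivAt_id b).mul_const a)).div_const 2
  exact (H.deriv).trans (by simp only [id, Pi.mul_apply]; field_simp)

lemma pd1_G22 (a b : ℝ) (h : a^2 + b^2 ≠ 0) :
    pd1 G22 (a, b) = a*b^2/(a^2+b^2) := by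
  have H := ((hlog1 (b^2) a h).mul_const (b*b)).div_const 2
  exact (H.deriv).trans (by field_simp)

lemma pd2_G22 (a b : ℝ) (h : a^2 + b^2 ≠ 0) :
    pd2 G22 (a, b) = b^3/(a^2+b^2) + b * Real.log (a^2+b^2) := by
  have H := ((hlog2 (a^2) b h).mul ((hasDerivAt_id b).mul (hasDerivAt_id b))).div_const 2
  exact (H.deriv).trans (by simp only [id, Pi.mul_apply]; field_simp; ring)

/-- `L_{λ,μ}(ln|x| x xᵀ) = (λ+μ) I₂ + (3λ+5μ) ln|x| I₂ + (3λ+7μ) x xᵀ/|x|²`, columnwise. -/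
theorem lame_log_xxT (l m : ℝ) (x : ℝ × ℝ) (hx : x ≠ 0) :
    lame l m (fun y => (Real.log (nrm y) * (y.1 * y.1), Real.log (nrm y) * (y.2 * y.1))) x =
      ((l + m) + (3 * l + 5 * m) * Real.log (nrm x)
          + (3 * l + 7 * m) * (x.1 * x.1) / (x.1 ^ 2 + x.2 ^ 2),
        (3 * l + 7 * m) * (x.2 * x.1) / (x.1 ^ 2 + x.2 ^ 2)) ∧
    lame l m (fun y => (Real.log (nrm y) * (y.1 * y.2), Real.log (nrm y) * (y.2 * y.2))) x =
      ((3 * l + 7 * m) * (x.1 * x.2) / (x.1 ^ 2 + x.2 ^ 2),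
        (l + m) + (3 * l + 5 * m) * Real.log (nrm x)
          + (3 * l + 7 * m) * (x.2 * x.2) / (x.1 ^ 2 + x.2 ^ 2)) := by
  have hx12 : x.1 ≠ 0 ∨ x.2 ≠ 0 := by
    by_contra h
    push_neg at h
    exact hx (Prod.ext h.1 h.2)
  have hs : (0:ℝ) < x.1^2 + x.2^2 := by
    rcases hx12 with h | h <;> positivity
  have hs0 : x.1^2 + x.2^2 ≠ 0 := ne_of_gt hs
  have hc1 : ∀ᶠ t in nhds x.1, t^2 + x.2^2 ≠ 0 := by
    have hcont : ContinuousAt (fun t : ℝ => t^2 + x.2^2) x.1 := by fun_prop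
    exact hcont.eventually_ne hs0
  have hc2 : ∀ᶠ t in nhds x.2, x.1^2 + t^2 ≠ 0 := by
    have hcont : ContinuousAt (fun t : ℝ => x.1^2 + t^2) x.2 := by fun_prop
    exact hcont.eventually_ne hs0
  -- second derivatives
  have A1 : pd1 (pd1 G11) x
      = 5*x.1^2/(x.1^2+x.2^2) - 2*x.1^4/(x.1^2+x.2^2)^2 + Real.log (x.1^2+x.2^2) := by
    have e : (fun t => pd1 G11 (t, x.2))
        =ᶠ[nhds x.1] fun t : ℝ => t^3/(t^2+x.2^2) + t * Real.log (t^2+x.2^2) := by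
      filter_upwards [hc1] with t ht
      exact pd1_G11 t x.2 ht
    have h1 := (hasDerivAt_pow 3 x.1).div (hq1 (x.2^2) x.1) hs0
    have h2 := (hasDerivAt_id x.1).mul (hlog1 (x.2^2) x.1 hs0)
    exact (e.deriv_eq).trans (((h1.add h2).deriv).trans (by simp only [id, Pi.mul_apply]; push_cast; field_simp [hs0]; ring))
  have A2 : pd2 (pd2 G11) x
      = x.1^2/(x.1^2+x.2^2) - 2*x.2^2*x.1^2/(x.1^2+x.2^2)^2 := by
    have e : (fun t => pd2 G11 (x.1, t))
        =ᶠ[nhds x.2] fun t : ℝ => (t * x.1^2)/(x.1^2+t^2) := by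
      filter_upwards [hc2] with t ht
      exact pd2_G11 x.1 t ht
    have h1 := ((hasDerivAt_id x.2).mul_const (x.1^2)).div (hq2 (x.1^2) x.2) hs0
    exact (e.deriv_eq).trans ((h1.deriv).trans (by simp only [id, Pi.mul_apply]; field_simp [hs0]))
  have B1 : pd1 (fun y => pd1 G11 y + pd2 G21 y) x
      = 1 + 3/2 * Real.log (x.1^2+x.2^2) + 3*x.1^2/(x.1^2+x.2^2) := by
    have e : (fun t => pd1 G11 (t, x.2) + pd2 G21 (t, x.2))
        =ᶠ[nhds x.1] fun t : ℝ => t + 3/2 * (t * Real.log (t^2+x.2^2)) := by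
      filter_upwards [hc1] with t ht
      rw [pd1_G11 t x.2 ht, pd2_G21 t x.2 ht]
      field_simp [ht]
      ring
    have h1 := (hasDerivAt_id x.1).add
      (((hasDerivAt_id x.1).mul (hlog1 (x.2^2) x.1 hs0)).const_mul (3/2))
    exact (e.deriv_eq).trans ((h1.deriv).trans (by simp only [id, Pi.mul_apply]; field_simp [hs0]; ring))
  have B2 : pd2 (fun y => pd1 G11 y + pd2 G21 y) x
      = 3*x.1*x.2/(x.1^2+x.2^2) := by
    have e : (fun t => pd1 G11 (x.1, t) + pd2 G21 (x.1, t))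
        =ᶠ[nhds x.2] fun t : ℝ => x.1 + 3/2 * (x.1 * Real.log (x.1^2+t^2)) := by
      filter_upwards [hc2] with t ht
      rw [pd1_G11 x.1 t ht, pd2_G21 x.1 t ht]
      field_simp [ht]
      ring
    have h1 := (hasDerivAt_const x.2 x.1).add
      (((hlog2 (x.1^2) x.2 hs0).const_mul x.1).const_mul (3/2))
    exact (e.deriv_eq).trans ((h1.deriv).trans (by field_simp [hs0]; ring))
  have C1 : pd1 (pd1 G21) x
      = 3*x.1*x.2/(x.1^2+x.2^2) - 2*x.1^3*x.2/(x.1^2+x.2^2)^2 := by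
    have e : (fun t => pd1 G21 (t, x.2))
        =ᶠ[nhds x.1] fun t : ℝ => (t^2*x.2)/(t^2+x.2^2) + x.2/2 * Real.log (t^2+x.2^2) := by
      filter_upwards [hc1] with t ht
      exact pd1_G21 t x.2 ht
    have h1 := ((hasDerivAt_pow 2 x.1).mul_const x.2).div (hq1 (x.2^2) x.1) hs0
    have h2 := (hlog1 (x.2^2) x.1 hs0).const_mul (x.2/2)
    exact (e.deriv_eq).trans (((h1.add h2).deriv).trans (by push_cast; field_simp [hs0]; ring))
  have C2 : pd2 (pd2 G21) x
      = 3*x.1*x.2/(x.1^2+x.2^2) - 2*x.2^3*x.1/(x.1^2+x.2^2)^2 := by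
    have e : (fun t => pd2 G21 (x.1, t))
        =ᶠ[nhds x.2] fun t : ℝ => (t^2*x.1)/(x.1^2+t^2) + x.1/2 * Real.log (x.1^2+t^2) := by
      filter_upwards [hc2] with t ht
      exact pd2_G21 x.1 t ht
    have h1 := ((hasDerivAt_pow 2 x.2).mul_const x.1).div (hq2 (x.1^2) x.2) hs0
    have h2 := (hlog2 (x.1^2) x.2 hs0).const_mul (x.1/2)
    exact (e.deriv_eq).trans (((h1.add h2).deriv).trans (by push_cast; field_simp [hs0]; ring))
  have D1 : pd1 (fun y => pd1 G21 y + pd2 G22 y) x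
      = 3*x.1*x.2/(x.1^2+x.2^2) := by
    have e : (fun t => pd1 G21 (t, x.2) + pd2 G22 (t, x.2))
        =ᶠ[nhds x.1] fun t : ℝ => x.2 + 3/2 * (x.2 * Real.log (t^2+x.2^2)) := by
      filter_upwards [hc1] with t ht
      rw [pd1_G21 t x.2 ht, pd2_G22 t x.2 ht]
      field_simp [ht]
      ring
    have h1 := (hasDerivAt_const x.1 x.2).add
      (((hlog1 (x.2^2) x.1 hs0).const_mul x.2).const_mul (3/2))
    exact (e.deriv_eq).trans ((h1.deriv).trans (by field_simp [hs0]; ring))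
  have D2 : pd2 (fun y => pd1 G21 y + pd2 G22 y) x
      = 1 + 3/2 * Real.log (x.1^2+x.2^2) + 3*x.2^2/(x.1^2+x.2^2) := by
    have e : (fun t => pd1 G21 (x.1, t) + pd2 G22 (x.1, t))
        =ᶠ[nhds x.2] fun t : ℝ => t + 3/2 * (t * Real.log (x.1^2+t^2)) := by
      filter_upwards [hc2] with t ht
      rw [pd1_G21 x.1 t ht, pd2_G22 x.1 t ht]
      field_simp [ht]
      ring
    have h1 := (hasDerivAt_id x.2).add
      (((hasDerivAt_id x.2).mul (hlog2 (x.1^2) x.2 hs0)).const_mul (3/2))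
    exact (e.deriv_eq).trans ((h1.deriv).trans (by simp only [id, Pi.mul_apply]; field_simp [hs0]; ring))
  have E1 : pd1 (pd1 G22) x
      = x.2^2/(x.1^2+x.2^2) - 2*x.1^2*x.2^2/(x.1^2+x.2^2)^2 := by
    have e : (fun t => pd1 G22 (t, x.2))
        =ᶠ[nhds x.1] fun t : ℝ => (t * x.2^2)/(t^2+x.2^2) := by
      filter_upwards [hc1] with t ht
      exact pd1_G22 t x.2 ht
    have h1 := ((hasDerivAt_id x.1).mul_const (x.2^2)).div (hq1 (x.2^2) x.1) hs0
    exact (e.deriv_eq).trans ((h1.deriv).trans (by simp only [id, Pi.mul_apply]; field_simp [hs0]))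
  have E2 : pd2 (pd2 G22) x
      = 5*x.2^2/(x.1^2+x.2^2) - 2*x.2^4/(x.1^2+x.2^2)^2 + Real.log (x.1^2+x.2^2) := by
    have e : (fun t => pd2 G22 (x.1, t))
        =ᶠ[nhds x.2] fun t : ℝ => t^3/(x.1^2+t^2) + t * Real.log (x.1^2+t^2) := by
      filter_upwards [hc2] with t ht
      exact pd2_G22 x.1 t ht
    have h1 := (hasDerivAt_pow 3 x.2).div (hq2 (x.1^2) x.2) hs0
    have h2 := (hasDerivAt_id x.2).mul (hlog2 (x.1^2) x.2 hs0)
    exact (e.deriv_eq).trans (((h1.add h2).deriv).trans (by simp only [id, Pi.mul_apply]; push_cast; field_simp [hs0]; ring))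
  have hlogn : Real.log (nrm x) = Real.log (x.1^2+x.2^2) / 2 := by
    rw [nrm]
    rw [show x.1 ^ 2 + x.2 ^ 2 = x.1^2 + x.2^2 from rfl]
    exact Real.log_sqrt (le_of_lt hs)
  have hu1 : (fun y : ℝ × ℝ => (Real.log (nrm y) * (y.1 * y.1), Real.log (nrm y) * (y.2 * y.1)))
      = fun y => (G11 y, G21 y) := by
    funext y
    have hn : Real.log (nrm y) = Real.log (y.1^2+y.2^2) / 2 := Real.log_sqrt (by positivity)
    simp only [hn, G11, G21, Prod.mk.injEq]
    constructor <;> ring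
  have hu2 : (fun y : ℝ × ℝ => (Real.log (nrm y) * (y.1 * y.2), Real.log (nrm y) * (y.2 * y.2)))
      = fun y => (G21 y, G22 y) := by
    funext y
    have hn : Real.log (nrm y) = Real.log (y.1^2+y.2^2) / 2 := Real.log_sqrt (by positivity)
    simp only [hn, G11, G21, G22, Prod.mk.injEq]
    constructor <;> ring
  rw [hu1, hu2]
  constructor
  · show (m * lap G11 x + (l + m) * pd1 (fun y => pd1 G11 y + pd2 G21 y) x,
          m * lap G21 x + (l + m) * pd2 (fun y => pd1 G11 y + pd2 G21 y) x) = _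
    rw [Prod.mk.injEq]
    constructor
    · rw [show lap G11 x = pd1 (pd1 G11) x + pd2 (pd2 G11) x from rfl, A1, A2, B1, hlogn]
      field_simp [hs0]
      ring
    · rw [show lap G21 x = pd1 (pd1 G21) x + pd2 (pd2 G21) x from rfl, C1, C2, B2]
      field_simp [hs0]
      ring
  · show (m * lap G21 x + (l + m) * pd1 (fun y => pd1 G21 y + pd2 G22 y) x,
          m * lap G22 x + (l + m) * pd2 (fun y => pd1 G21 y + pd2 G22 y) x) = _
    rw [Prod.mk.injEq]
    constructor
    · rw [show lap G21 x = pd1 (pd1 G21) x + pd2 (pd2 G21) x from rfl, C1, C2, D1]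
      field_simp [hs0]
      ring
    · rw [show lap G22 x = pd1 (pd1 G22) x + pd2 (pd2 G22) x from rfl, E1, E2, D2, hlogn]
      field_simp [hs0]
      ring
end

section
/- Let ∂D be the circle of radius R centered at the origin in ℝ². Then for every x with |x| < R, ∫_{∂D} (1/(2π)) ln|x - y| (y₂, -y₁)ᵀ ds(y) = -(R/2) (x₂, -x₁)ᵀ. -/
open Real

private lemma circle_key (R : ℝ) (hR : 0 < R) (c : ℂ) (hc : ‖c‖ < R) :
    (∫ θ in (0:ℝ)..(2 * π),
        ((Real.log (‖(R:ℂ) - c * Complex.exp (θ * Complex.I)‖) : ℂ)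
          * Complex.exp (θ * Complex.I)))
      = -(π : ℂ) * (starRingEnd ℂ) c / R := by
  set f : ℂ → ℂ := fun z => Complex.log ((R:ℂ) - c * z) with hf
  have hslit : ∀ z : ℂ, ‖z‖ ≤ 1 → ((R:ℂ) - c * z) ∈ Complex.slitPlane := by
    intro z hz
    rw [Complex.mem_slitPlane_iff]
    left
    have h1 : (c * z).re ≤ ‖c * z‖ := Complex.re_le_norm _
    have h2 : ‖c * z‖ ≤ ‖c‖ := by
      rw [norm_mul]
      calc ‖c‖ * ‖z‖ ≤ ‖c‖ * 1 :=
            mul_le_mul_of_nonneg_left hz (norm_nonneg c)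
        _ = ‖c‖ := mul_one _
    simp only [Complex.sub_re, Complex.ofReal_re]
    linarith
  have hdiff : ∀ z : ℂ, ‖z‖ ≤ 1 → DifferentiableAt ℂ f z := by
    intro z hz
    exact ((differentiableAt_const _).sub
      ((differentiableAt_const _).mul differentiableAt_id)).clog (hslit z hz)
  have hd0 : HasDerivAt f (-c / R) 0 := by
    have hin : HasDerivAt (fun z : ℂ => (R:ℂ) - c * z) (-c) 0 := by
      simpa using ((hasDerivAt_id (0:ℂ)).const_mul c).const_sub (R:ℂ)
    have := hin.clog (by simpa using hslit 0 (by simp))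
    simpa using this
  -- the two circle integrals
  have hmem : ∀ z ∈ Metric.closedBall (0:ℂ) 1, DifferentiableAt ℂ f z := by
    intro z hz
    exact hdiff z (by simpa [Metric.mem_closedBall, Complex.dist_eq] using hz)
  have hzero : (∮ z in C(0,1), f z) = 0 :=
    Complex.circleIntegral_eq_zero_of_differentiable_on_off_countable zero_le_one
      Set.countable_empty (fun z hz => (hmem z hz).continuousAt.continuousWithinAt)
      (fun z hz => hmem z (Metric.ball_subset_closedBall hz.1))
  have hone : (∮ z in C(0,1), (1 / (z - 0)) ^ 1 • (z - 0)⁻¹ • f z)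
      = (2 * π * Complex.I) • (-c / R) := by
    have hdon : DifferentiableOn ℂ f (Metric.closedBall (0:ℂ) (1:NNReal)) := by
      intro z hz
      exact (hmem z (by simpa using hz)).differentiableWithinAt
    have hps := hdon.hasFPowerSeriesOnBall one_pos
    have h1 : (cauchyPowerSeries f 0 (1:NNReal) 1 fun _ => (1:ℂ)) = -c / R :=
      hps.hasFPowerSeriesAt.hasDerivAt.unique hd0
    rw [cauchyPowerSeries_apply] at h1
    have h2πI : (2 * (π:ℂ) * Complex.I) ≠ 0 := by
      simp [Real.pi_ne_zero, Complex.I_ne_zero, Complex.ofReal_ne_zero]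
    calc (∮ z in C(0,1), (1 / (z - 0)) ^ 1 • (z - 0)⁻¹ • f z)
        = (2 * (π:ℂ) * Complex.I) • ((2 * (π:ℂ) * Complex.I)⁻¹ •
            ∮ z in C(0,(1:NNReal)), ((1:ℂ) / (z - 0)) ^ 1 • (z - 0)⁻¹ • f z) := by
          push_cast
          rw [smul_smul, mul_inv_cancel₀ h2πI, one_smul]
      _ = (2 * π * Complex.I) • (-c / R) := by rw [h1]
  -- unfold to interval integrals
  have hexp : ∀ θ : ℝ, Complex.exp (θ * Complex.I) ≠ 0 := fun θ => Complex.exp_ne_zero _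
  have hcontE : Continuous fun θ : ℝ => Complex.exp ((θ:ℂ) * Complex.I) :=
    Complex.continuous_exp.comp (Complex.continuous_ofReal.mul continuous_const)
  have hcont : Continuous fun θ : ℝ => f (Complex.exp (θ * Complex.I)) := by
    rw [continuous_iff_continuousAt]
    intro θ
    exact (hdiff _ (by simp [Complex.norm_exp_ofReal_mul_I])).continuousAt.comp
      hcontE.continuousAt
  simp only [circleIntegral, deriv_circleMap, circleMap, Complex.ofReal_one, one_mul,
    zero_add, smul_eq_mul] at hzero hone
  have hA : (∫ θ in (0:ℝ)..(2*π),
      Complex.exp (θ * Complex.I) * f (Complex.exp (θ * Complex.I))) = 0 := by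
    have : (∫ θ in (0:ℝ)..(2*π), Complex.I *
        (Complex.exp (θ * Complex.I) * f (Complex.exp (θ * Complex.I)))) = 0 := by
      rw [← hzero]; apply intervalIntegral.integral_congr; intro θ _; ring
    rw [intervalIntegral.integral_const_mul] at this
    simpa [Complex.I_ne_zero] using this
  have hB : (∫ θ in (0:ℝ)..(2*π),
      (Complex.exp (θ * Complex.I))⁻¹ * f (Complex.exp (θ * Complex.I)))
      = (2 * π) * (-c / R) := by
    have : (∫ θ in (0:ℝ)..(2*π), Complex.I *
        ((Complex.exp (θ * Complex.I))⁻¹ * f (Complex.exp (θ * Complex.I))))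
        = 2 * π * Complex.I * (-c / R) := by
      rw [← hone]
      apply intervalIntegral.integral_congr; intro θ _
      field_simp
      ring
    rw [intervalIntegral.integral_const_mul] at this
    have hI : Complex.I ≠ 0 := Complex.I_ne_zero
    exact mul_left_cancel₀ hI (by rw [this]; ring)
  -- conjugation
  have hconj : (∫ θ in (0:ℝ)..(2*π),
      (starRingEnd ℂ) ((Complex.exp (θ * Complex.I))⁻¹ * f (Complex.exp (θ * Complex.I))))
      = (starRingEnd ℂ) ((2 * π) * (-c / R)) := by
    rw [← hB]
    simp only [intervalIntegral]
    rw [map_sub, ← integral_conj, ← integral_conj]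
  -- real part extraction
  have hre : ∀ θ : ℝ,
      ((Real.log (‖(R:ℂ) - c * Complex.exp (θ * Complex.I)‖) : ℂ)
          * Complex.exp (θ * Complex.I))
      = (Complex.exp (θ * Complex.I) * f (Complex.exp (θ * Complex.I))
        + (starRingEnd ℂ) ((Complex.exp (θ * Complex.I))⁻¹ * f (Complex.exp (θ * Complex.I)))) / 2 := by
    intro θ
    have h1 : ((f (Complex.exp (θ * Complex.I))).re : ℂ)
        = Real.log (‖(R:ℂ) - c * Complex.exp (θ * Complex.I)‖) := by
      rw [hf]
      simp [Complex.log_re]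
    have h2 : (starRingEnd ℂ) ((Complex.exp (θ * Complex.I))⁻¹)
        = Complex.exp (θ * Complex.I) := by
      rw [map_inv₀, ← Complex.exp_conj]
      simp [← Complex.exp_neg]
    rw [map_mul, h2, ← h1]
    have h3 := Complex.add_conj (f (Complex.exp (θ * Complex.I)))
    push_cast at h3
    linear_combination (-(Complex.exp (θ * Complex.I)) / 2) * h3
  have hint1 : IntervalIntegrable (fun θ : ℝ =>
      Complex.exp (θ * Complex.I) * f (Complex.exp (θ * Complex.I)))
      MeasureTheory.volume 0 (2*π) := (hcontE.mul hcont).intervalIntegrable _ _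
  have hint2 : IntervalIntegrable (fun θ : ℝ =>
      (starRingEnd ℂ) ((Complex.exp (θ * Complex.I))⁻¹ * f (Complex.exp (θ * Complex.I))))
      MeasureTheory.volume 0 (2*π) := by
    apply Continuous.intervalIntegrable
    exact Complex.continuous_conj.comp ((hcontE.inv₀ hexp).mul hcont)
  calc (∫ θ in (0:ℝ)..(2 * π),
        ((Real.log (‖(R:ℂ) - c * Complex.exp (θ * Complex.I)‖) : ℂ)
          * Complex.exp (θ * Complex.I)))
      = ∫ θ in (0:ℝ)..(2*π),
        (Complex.exp (θ * Complex.I) * f (Complex.exp (θ * Complex.I))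
        + (starRingEnd ℂ) ((Complex.exp (θ * Complex.I))⁻¹ * f (Complex.exp (θ * Complex.I)))) / 2 := by
        apply intervalIntegral.integral_congr; intro θ _; exact hre θ
    _ = (∫ θ in (0:ℝ)..(2*π),
        (Complex.exp (θ * Complex.I) * f (Complex.exp (θ * Complex.I))
        + (starRingEnd ℂ) ((Complex.exp (θ * Complex.I))⁻¹ * f (Complex.exp (θ * Complex.I))))) / 2 := by
        rw [intervalIntegral.integral_div]
    _ = (0 + (starRingEnd ℂ) ((2 * π) * (-c / R))) / 2 := by
        rw [intervalIntegral.integral_add hint1 hint2, hA, hconj]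
    _ = -(π : ℂ) * (starRingEnd ℂ) c / R := by
        simp only [map_mul, map_div₀, map_neg, map_ofNat, Complex.conj_ofReal, zero_add]
        ring

/-- For `x` inside the disk of radius `R`,
`∫_{∂D} (1/(2π)) ln|x-y| (y₂,-y₁)ᵀ ds(y) = -(R/2)(x₂,-x₁)ᵀ`
(the circle parametrized by `y = (R cos θ, R sin θ)`, `ds = R dθ`). -/
theorem circle_log_integral (R : ℝ) (hR : 0 < R) (x : ℝ × ℝ)
    (hx : Real.sqrt (x.1 ^ 2 + x.2 ^ 2) < R) :
    (∫ θ in (0:ℝ)..(2 * π),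
        (1 / (2 * π)) * Real.log (Real.sqrt ((x.1 - R * Real.cos θ) ^ 2
          + (x.2 - R * Real.sin θ) ^ 2)) * (R * Real.sin θ) * R)
      = -(R / 2) * x.2 ∧
    (∫ θ in (0:ℝ)..(2 * π),
        (1 / (2 * π)) * Real.log (Real.sqrt ((x.1 - R * Real.cos θ) ^ 2
          + (x.2 - R * Real.sin θ) ^ 2)) * (-(R * Real.cos θ)) * R)
      = -(R / 2) * (-x.1) := by
  have hπ : (π:ℝ) ≠ 0 := Real.pi_ne_zero
  set c : ℂ := (x.1 : ℂ) - (x.2 : ℂ) * Complex.I with hcdef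
  have habs : ‖c‖ = Real.sqrt (x.1^2 + x.2^2) := by
    rw [Complex.norm_def, Complex.normSq_apply]
    congr 1
    simp [hcdef]
    ring
  have hc : ‖c‖ < R := by rw [habs]; exact hx
  have hkey := circle_key R hR c hc
  have habs2 : ∀ θ : ℝ, ‖(R:ℂ) - c * Complex.exp (θ * Complex.I)‖
      = Real.sqrt ((x.1 - R * Real.cos θ)^2 + (x.2 - R * Real.sin θ)^2) := by
    intro θ
    rw [Complex.norm_def, Complex.normSq_apply]
    congr 1
    simp [hcdef, Complex.sub_re, Complex.sub_im, Complex.mul_re, Complex.mul_im,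
      Complex.exp_ofReal_mul_I_re, Complex.exp_ofReal_mul_I_im]
    linear_combination (x.1^2 + x.2^2 - R^2) * Real.sin_sq_add_cos_sq θ
  -- continuity of the complex integrand
  have hcontE : Continuous fun θ : ℝ => Complex.exp ((θ:ℂ) * Complex.I) :=
    Complex.continuous_exp.comp (Complex.continuous_ofReal.mul continuous_const)
  have hg : Continuous fun θ : ℝ => ((R:ℂ) - c * Complex.exp ((θ:ℂ) * Complex.I)) :=
    continuous_const.sub (continuous_const.mul hcontE)
  have hne : ∀ θ : ℝ, ((R:ℂ) - c * Complex.exp ((θ:ℂ) * Complex.I)) ≠ 0 := by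
    intro θ h
    have h1 : (c * Complex.exp ((θ:ℂ) * Complex.I)).re
        ≤ ‖c * Complex.exp ((θ:ℂ) * Complex.I)‖ := Complex.re_le_norm _
    have h2 : ‖c * Complex.exp ((θ:ℂ) * Complex.I)‖ = ‖c‖ := by
      rw [norm_mul, Complex.norm_exp_ofReal_mul_I, mul_one]
    have h3 : ((R:ℂ) - c * Complex.exp ((θ:ℂ) * Complex.I)).re = 0 := by rw [h]; rfl
    simp only [Complex.sub_re, Complex.ofReal_re] at h3
    linarith
  have hposabs : ∀ θ : ℝ, 0 < ‖(R:ℂ) - c * Complex.exp ((θ:ℂ) * Complex.I)‖ :=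
    fun θ => norm_pos_iff.mpr (hne θ)
  set F : ℝ → ℂ := fun θ =>
    ((Real.log (‖(R:ℂ) - c * Complex.exp (θ * Complex.I)‖) : ℂ)
      * Complex.exp (θ * Complex.I)) with hFdef
  have hcontF : Continuous F := by
    apply Continuous.mul _ hcontE
    apply Complex.continuous_ofReal.comp
    rw [continuous_iff_continuousAt]
    intro θ
    exact ((continuous_norm.comp hg).continuousAt).log (hposabs θ).ne'
  have hIntF : IntervalIntegrable F MeasureTheory.volume 0 (2*π) :=
    hcontF.intervalIntegrable _ _
  -- value of the complex integral
  have hV : (∫ θ in (0:ℝ)..(2*π), F θ)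
      = ((-(π*x.1)/R : ℝ) : ℂ) + ((-(π*x.2)/R : ℝ) : ℂ) * Complex.I := by
    rw [hkey, hcdef]
    have hR' : (R:ℂ) ≠ 0 := Complex.ofReal_ne_zero.mpr hR.ne'
    field_simp
    simp only [map_sub, map_mul, Complex.conj_ofReal, Complex.conj_I]
    push_cast
    field_simp
    ring
  have hIm : (∫ θ in (0:ℝ)..(2*π),
      Real.log (Real.sqrt ((x.1 - R * Real.cos θ) ^ 2 + (x.2 - R * Real.sin θ) ^ 2))
        * Real.sin θ) = -(π*x.2)/R := by
    have h1 := Complex.imCLM.intervalIntegral_comp_comm hIntF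
    have h2 : ∀ θ : ℝ, Complex.imCLM (F θ)
        = Real.log (Real.sqrt ((x.1 - R * Real.cos θ) ^ 2 + (x.2 - R * Real.sin θ) ^ 2))
          * Real.sin θ := by
      intro θ
      simp [hFdef, Complex.mul_im, Complex.exp_ofReal_mul_I_im, Complex.exp_ofReal_mul_I_re,
        habs2 θ]
    calc (∫ θ in (0:ℝ)..(2*π),
        Real.log (Real.sqrt ((x.1 - R * Real.cos θ) ^ 2 + (x.2 - R * Real.sin θ) ^ 2))
          * Real.sin θ)
        = ∫ θ in (0:ℝ)..(2*π), Complex.imCLM (F θ) := by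
          apply intervalIntegral.integral_congr; intro θ _; exact (h2 θ).symm
      _ = Complex.imCLM (∫ θ in (0:ℝ)..(2*π), F θ) := h1
      _ = -(π*x.2)/R := by rw [hV]; simp
  have hRe : (∫ θ in (0:ℝ)..(2*π),
      Real.log (Real.sqrt ((x.1 - R * Real.cos θ) ^ 2 + (x.2 - R * Real.sin θ) ^ 2))
        * Real.cos θ) = -(π*x.1)/R := by
    have h1 := Complex.reCLM.intervalIntegral_comp_comm hIntF
    have h2 : ∀ θ : ℝ, Complex.reCLM (F θ)
        = Real.log (Real.sqrt ((x.1 - R * Real.cos θ) ^ 2 + (x.2 - R * Real.sin θ) ^ 2))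
          * Real.cos θ := by
      intro θ
      simp [hFdef, Complex.mul_re, Complex.exp_ofReal_mul_I_im, Complex.exp_ofReal_mul_I_re,
        habs2 θ]
    calc (∫ θ in (0:ℝ)..(2*π),
        Real.log (Real.sqrt ((x.1 - R * Real.cos θ) ^ 2 + (x.2 - R * Real.sin θ) ^ 2))
          * Real.cos θ)
        = ∫ θ in (0:ℝ)..(2*π), Complex.reCLM (F θ) := by
          apply intervalIntegral.integral_congr; intro θ _; exact (h2 θ).symm
      _ = Complex.reCLM (∫ θ in (0:ℝ)..(2*π), F θ) := h1
      _ = -(π*x.1)/R := by rw [hV]; simp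
  constructor
  · calc (∫ θ in (0:ℝ)..(2 * π),
        (1 / (2 * π)) * Real.log (Real.sqrt ((x.1 - R * Real.cos θ) ^ 2
          + (x.2 - R * Real.sin θ) ^ 2)) * (R * Real.sin θ) * R)
        = ∫ θ in (0:ℝ)..(2 * π), (R^2/(2*π)) *
            (Real.log (Real.sqrt ((x.1 - R * Real.cos θ) ^ 2
              + (x.2 - R * Real.sin θ) ^ 2)) * Real.sin θ) := by
          apply intervalIntegral.integral_congr; intro θ _; ring
      _ = (R^2/(2*π)) * (-(π*x.2)/R) := by
          rw [intervalIntegral.integral_const_mul, hIm]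
      _ = -(R / 2) * x.2 := by field_simp
  · calc (∫ θ in (0:ℝ)..(2 * π),
        (1 / (2 * π)) * Real.log (Real.sqrt ((x.1 - R * Real.cos θ) ^ 2
          + (x.2 - R * Real.sin θ) ^ 2)) * (-(R * Real.cos θ)) * R)
        = ∫ θ in (0:ℝ)..(2 * π), (-(R^2)/(2*π)) *
            (Real.log (Real.sqrt ((x.1 - R * Real.cos θ) ^ 2
              + (x.2 - R * Real.sin θ) ^ 2)) * Real.cos θ) := by
          apply intervalIntegral.integral_congr; intro θ _; ring
      _ = (-(R^2)/(2*π)) * (-(π*x.1)/R) := by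
          rw [intervalIntegral.integral_const_mul, hRe]
      _ = -(R / 2) * (-x.1) := by field_simp
end

section
/- Let ∂D be the circle of radius R centered at the origin in ℝ². Then for every x with |x| < R, ∫_{∂D} (1/(2π)) ((x-y)(x-y)ᵀ/|x-y|²) (y₂, -y₁)ᵀ ds(y) = (R/2) (x₂, -x₁)ᵀ. -/
open Real

/-- For `x` inside the disk of radius `R`,
`∫_{∂D} (1/(2π)) ((x-y)(x-y)ᵀ/|x-y|²) (y₂,-y₁)ᵀ ds(y) = (R/2)(x₂,-x₁)ᵀ`. -/
theorem circle_projection_integral (R : ℝ) (hR : 0 < R) (x : ℝ × ℝ)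
    (hx : Real.sqrt (x.1 ^ 2 + x.2 ^ 2) < R) :
    (∫ θ in (0:ℝ)..(2 * π),
        (1 / (2 * π)) * ((x.1 - R * Real.cos θ) *
          ((x.1 - R * Real.cos θ) * (R * Real.sin θ)
            + (x.2 - R * Real.sin θ) * (-(R * Real.cos θ))) /
          ((x.1 - R * Real.cos θ) ^ 2 + (x.2 - R * Real.sin θ) ^ 2)) * R)
      = (R / 2) * x.2 ∧
    (∫ θ in (0:ℝ)..(2 * π),
        (1 / (2 * π)) * ((x.2 - R * Real.sin θ) *
          ((x.1 - R * Real.cos θ) * (R * Real.sin θ)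
            + (x.2 - R * Real.sin θ) * (-(R * Real.cos θ))) /
          ((x.1 - R * Real.cos θ) ^ 2 + (x.2 - R * Real.sin θ) ^ 2)) * R)
      = (R / 2) * (-x.1) := by
  set z : ℂ := ⟨x.1, x.2⟩ with hz_def
  have hzabs : ‖z‖ < R := by
    rw [Complex.norm_def, Complex.normSq_mk]
    convert hx using 3 <;> ring
  set f : ℂ → ℂ := fun w =>
    (z * R^2 - (starRingEnd ℂ) z * w^2)/((starRingEnd ℂ) z * w - (R:ℂ)^2) with hf_def
  have hden : ∀ w : ℂ, ‖w‖ ≤ R → (starRingEnd ℂ) z * w - (R:ℂ)^2 ≠ 0 := by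
    intro w hw h
    have h2 : (starRingEnd ℂ) z * w = (R:ℂ)^2 := sub_eq_zero.mp h
    have h3 : ‖z‖ * ‖w‖ = R^2 := by
      have := congrArg norm h2
      simpa [norm_mul, Complex.norm_conj, Complex.norm_real, abs_of_pos hR] using this
    nlinarith [norm_nonneg z, norm_nonneg w]
  have hdiff : DifferentiableOn ℂ f (Metric.closedBall 0 R) := by
    apply DifferentiableOn.div
    · fun_prop
    · fun_prop
    · intro w hw
      exact hden w (by simpa [Complex.dist_eq] using hw)
  have hcl : DiffContOnCl ℂ f (Metric.ball 0 R) := by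
    apply DifferentiableOn.diffContOnCl
    rwa [closure_ball 0 hR.ne']
  have hcauchy := hcl.circleIntegral_sub_inv_smul (w := 0) (by simp [hR])
  have hf0 : f 0 = -z := by
    simp only [hf_def]
    rw [div_eq_iff (by simpa using hden 0 (by simp [hR.le]))]
    ring
  -- turn the circle integral into an interval integral
  have hne : ∀ θ : ℝ, circleMap 0 R θ ≠ 0 := by
    intro θ h
    have := norm_circleMap_zero R θ
    rw [h] at this
    simp [abs_of_pos hR] at this
    linarith
  have hintf : ∫ θ in (0:ℝ)..(2*π), f (circleMap 0 R θ) = -(2*π) * z := by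
    rw [circleIntegral] at hcauchy
    simp only [deriv_circleMap, smul_eq_mul, sub_zero] at hcauchy
    have heq : ∀ θ : ℝ, circleMap 0 R θ * Complex.I * ((circleMap 0 R θ)⁻¹ * f (circleMap 0 R θ))
        = Complex.I * f (circleMap 0 R θ) := by
      intro θ
      field_simp [hne θ]
    rw [intervalIntegral.integral_congr (fun θ _ => heq θ)] at hcauchy
    rw [intervalIntegral.integral_const_mul] at hcauchy
    have : Complex.I * ∫ θ in (0:ℝ)..(2*π), f (circleMap 0 R θ)
        = Complex.I * (-(2*π) * z) := by
      rw [hcauchy, hf0]; ring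
    exact mul_left_cancel₀ Complex.I_ne_zero this
  -- algebraic key
  have key : ∀ w : ℂ, w * (starRingEnd ℂ) w = (R:ℂ)^2 →
      Complex.I * (z*(R:ℂ)^2 - (starRingEnd ℂ) z*w^2) * ((z-w) * (starRingEnd ℂ) (z-w))
        = 2*(z-w)*((Complex.I/2)*((z-w)*(starRingEnd ℂ) w - (starRingEnd ℂ) (z-w)*w))
          *((starRingEnd ℂ) z*w - (R:ℂ)^2) := by
    intro w hww
    simp only [map_sub]
    linear_combination (-Complex.I * (starRingEnd ℂ) z * (z - w)^2) * hww
  -- the denominator is nonvanishing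
  have hD : ∀ θ : ℝ, (x.1 - R * Real.cos θ)^2 + (x.2 - R * Real.sin θ)^2 ≠ 0 := by
    intro θ h
    have ha : x.1 - R * Real.cos θ = 0 := by nlinarith [sq_nonneg (x.1 - R * Real.cos θ), sq_nonneg (x.2 - R * Real.sin θ)]
    have hb : x.2 - R * Real.sin θ = 0 := by nlinarith [sq_nonneg (x.1 - R * Real.cos θ), sq_nonneg (x.2 - R * Real.sin θ)]
    have h2 : x.1 ^ 2 + x.2 ^ 2 = R ^ 2 := by
      linear_combination (x.1 + R * Real.cos θ) * ha + (x.2 + R * Real.sin θ) * hb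
        + R ^ 2 * (Real.sin_sq_add_cos_sq θ)
    rw [h2, Real.sqrt_sq hR.le] at hx
    linarith
  -- real integrands
  set i₁ : ℝ → ℝ := fun θ => (1 / (2 * π)) * ((x.1 - R * Real.cos θ) *
          ((x.1 - R * Real.cos θ) * (R * Real.sin θ)
            + (x.2 - R * Real.sin θ) * (-(R * Real.cos θ))) /
          ((x.1 - R * Real.cos θ) ^ 2 + (x.2 - R * Real.sin θ) ^ 2)) * R with hi1
  set i₂ : ℝ → ℝ := fun θ => (1 / (2 * π)) * ((x.2 - R * Real.sin θ) *
          ((x.1 - R * Real.cos θ) * (R * Real.sin θ)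
            + (x.2 - R * Real.sin θ) * (-(R * Real.cos θ))) /
          ((x.1 - R * Real.cos θ) ^ 2 + (x.2 - R * Real.sin θ) ^ 2)) * R with hi2
  have hc1 : Continuous i₁ := by
    apply Continuous.mul _ continuous_const
    apply Continuous.mul continuous_const
    exact Continuous.div (by fun_prop) (by fun_prop) hD
  have hc2 : Continuous i₂ := by
    apply Continuous.mul _ continuous_const
    apply Continuous.mul continuous_const
    exact Continuous.div (by fun_prop) (by fun_prop) hD
  -- pointwise identity
  have hpoint : ∀ θ : ℝ, ((i₁ θ : ℂ) + (i₂ θ : ℂ) * Complex.I)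
      = ((R / (2*π) : ℝ) : ℂ) * (Complex.I/2) * f (circleMap 0 R θ) := by
    intro θ
    set w : ℂ := circleMap 0 R θ with hw_def
    have hw : w = ⟨R * Real.cos θ, R * Real.sin θ⟩ := by
      apply Complex.ext <;>
        simp [hw_def, circleMap, Complex.exp_ofReal_mul_I_re, Complex.exp_ofReal_mul_I_im]
    have hzw : z - w = ⟨x.1 - R * Real.cos θ, x.2 - R * Real.sin θ⟩ := by
      rw [hw, hz_def]; apply Complex.ext <;> simp
    have habsw : ‖w‖ ≤ R := by rw [hw_def, norm_circleMap_zero, abs_of_pos hR]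
    have hww : w * (starRingEnd ℂ) w = (R:ℂ)^2 := by
      rw [Complex.mul_conj]
      rw [← Complex.sq_norm, hw_def, norm_circleMap_zero, abs_of_pos hR]
      push_cast
      ring
    have hDc : (((x.1 - R * Real.cos θ) ^ 2 + (x.2 - R * Real.sin θ) ^ 2 : ℝ) : ℂ)
        = (z - w) * (starRingEnd ℂ) (z - w) := by
      rw [hzw, Complex.mul_conj, Complex.normSq_mk]
      push_cast
      ring
    have hNc : (((x.1 - R * Real.cos θ) * (R * Real.sin θ)
            + (x.2 - R * Real.sin θ) * (-(R * Real.cos θ)) : ℝ) : ℂ)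
        = (Complex.I/2)*((z-w)*(starRingEnd ℂ) w - (starRingEnd ℂ) (z-w)*w) := by
      rw [hzw, hw]
      apply Complex.ext <;>
        simp [Complex.ext_iff, Complex.mul_re, Complex.mul_im, Complex.div_re, Complex.div_im,
          Complex.sin_ofReal_re, Complex.cos_ofReal_re] <;>
        ring
    have hD' : (((x.1 - R * Real.cos θ) ^ 2 + (x.2 - R * Real.sin θ) ^ 2 : ℝ) : ℂ) ≠ 0 :=
      Complex.ofReal_ne_zero.mpr (hD θ)
    have hden' := hden w habsw
    have h1 : (Complex.I/2) * f w
        = (z - w) * (((x.1 - R * Real.cos θ) * (R * Real.sin θ)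
            + (x.2 - R * Real.sin θ) * (-(R * Real.cos θ)) : ℝ) : ℂ)
          / (((x.1 - R * Real.cos θ) ^ 2 + (x.2 - R * Real.sin θ) ^ 2 : ℝ) : ℂ) := by
      rw [hNc, eq_div_iff hD', hDc]
      have hkey := key w hww
      have hfden : f w * ((starRingEnd ℂ) z * w - (R:ℂ)^2) = z * R^2 - (starRingEnd ℂ) z * w^2 := by
        rw [hf_def]
        field_simp
      apply mul_left_cancel₀ (mul_ne_zero two_ne_zero hden')
      linear_combination (Complex.I * ((z - w) * (starRingEnd ℂ) (z - w))) * hfden + hkey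
    rw [mul_assoc, h1, hi1, hi2, hzw]
    have hpi : (π : ℝ) ≠ 0 := Real.pi_ne_zero
    rw [Complex.mk_eq_add_mul_I]
    push_cast
    field_simp
  -- assemble
  have hint1 : IntervalIntegrable (fun θ => (i₁ θ : ℂ)) MeasureTheory.volume 0 (2*π) :=
    (Complex.continuous_ofReal.comp hc1).intervalIntegrable _ _
  have hint2 : IntervalIntegrable (fun θ => (i₂ θ : ℂ) * Complex.I) MeasureTheory.volume 0 (2*π) :=
    ((Complex.continuous_ofReal.comp hc2).mul continuous_const).intervalIntegrable _ _
  have hsplit : (∫ θ in (0:ℝ)..(2*π), ((i₁ θ : ℂ) + (i₂ θ : ℂ) * Complex.I))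
      = ((∫ θ in (0:ℝ)..(2*π), i₁ θ : ℝ) : ℂ) + ((∫ θ in (0:ℝ)..(2*π), i₂ θ : ℝ) : ℂ) * Complex.I := by
    rw [intervalIntegral.integral_add hint1 hint2, intervalIntegral.integral_mul_const,
      intervalIntegral.integral_ofReal, intervalIntegral.integral_ofReal]
  have hval : (∫ θ in (0:ℝ)..(2*π), ((i₁ θ : ℂ) + (i₂ θ : ℂ) * Complex.I))
      = ((R/2 * x.2 : ℝ) : ℂ) + ((R/2 * (-x.1) : ℝ) : ℂ) * Complex.I := by
    rw [intervalIntegral.integral_congr (fun θ _ => hpoint θ)]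
    rw [intervalIntegral.integral_const_mul, hintf]
    rw [hz_def, Complex.mk_eq_add_mul_I]
    push_cast
    field_simp [Complex.ofReal_ne_zero.mpr Real.pi_ne_zero]
    linear_combination (-(R:ℂ) * (x.2:ℂ)) * Complex.I_sq
  rw [hval, Complex.ext_iff] at hsplit
  simp only [Complex.add_re, Complex.add_im, Complex.ofReal_re, Complex.ofReal_im,
    Complex.mul_re, Complex.mul_im, Complex.I_re, Complex.I_im, mul_zero, mul_one,
    zero_mul, sub_zero, zero_sub, zero_add, add_zero, neg_zero, neg_neg] at hsplit
  obtain ⟨hre, him⟩ := hsplit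
  constructor
  · linarith [hre]
  · linarith [him]
end

section
/- Let Γ(x) = α₁ ln|x| I₂ - α₂ (x xᵀ)/|x|² with α₁ = (1/(4π))(1/μ + 1/(2μ+λ)) and α₂ = (1/(4π))(1/μ - 1/(2μ+λ)), and let ζ₃(y) = (1/(2πR³))(y₂, -y₁)ᵀ on the circle ∂D_R of radius R. Then for every x with |x| < R, the single layer potential S_{∂D}[ζ₃](x) := ∫_{∂D_R} Γ(x-y) ζ₃(y) ds(y) equals -(R/(2μ)) ζ₃(x). -/
open Real intervalIntegral

noncomputable section

namespace SLZ3

/-- complex log integrand -/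
def Lg (u : ℂ) (θ : ℝ) : ℂ := Complex.log (1 - u * Complex.exp (-(θ:ℂ) * Complex.I))

lemma habs (u : ℂ) (hu : ‖u‖ < 1) (θ : ℝ) :
    ‖u * Complex.exp (-(θ:ℂ) * Complex.I)‖ < 1 := by
  have h : (-(θ:ℂ) * Complex.I) = ((-θ : ℝ) : ℂ) * Complex.I := by push_cast; ring
  rw [norm_mul, h, Complex.norm_exp_ofReal_mul_I, mul_one]; exact hu

lemma hre (u : ℂ) (hu : ‖u‖ < 1) (θ : ℝ) :
    0 < (1 - u * Complex.exp (-(θ:ℂ) * Complex.I)).re := by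
  have h := habs u hu θ
  have h2 : (u * Complex.exp (-(θ:ℂ) * Complex.I)).re ≤
      ‖u * Complex.exp (-(θ:ℂ) * Complex.I)‖ := Complex.re_le_norm _
  simp only [Complex.sub_re, Complex.one_re]
  linarith

lemma hne (u : ℂ) (hu : ‖u‖ < 1) (θ : ℝ) :
    1 - u * Complex.exp (-(θ:ℂ) * Complex.I) ≠ 0 := by
  intro h
  have h0 := hre u hu θ
  rw [h] at h0; simp at h0

lemma hslit (u : ℂ) (hu : ‖u‖ < 1) (θ : ℝ) :
    1 - u * Complex.exp (-(θ:ℂ) * Complex.I) ∈ Complex.slitPlane :=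
  Complex.mem_slitPlane_iff.mpr (Or.inl (hre u hu θ))

lemma hasDerivAt_exp_neg (θ : ℝ) :
    HasDerivAt (fun t : ℝ => Complex.exp (-(t:ℂ) * Complex.I))
      (Complex.exp (-(θ:ℂ) * Complex.I) * (-Complex.I)) θ := by
  have h : HasDerivAt (fun z : ℂ => Complex.exp (-z * Complex.I))
      (Complex.exp (-(θ:ℂ) * Complex.I) * (-Complex.I)) ((θ:ℂ)) := by
    have := ((hasDerivAt_id ((θ:ℂ))).neg.mul_const Complex.I).cexp
    simpa using this
  exact h.comp_ofReal

lemma hasDerivAt_exp_pos (θ : ℝ) :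
    HasDerivAt (fun t : ℝ => Complex.exp ((t:ℂ) * Complex.I))
      (Complex.exp ((θ:ℂ) * Complex.I) * Complex.I) θ := by
  have h : HasDerivAt (fun z : ℂ => Complex.exp (z * Complex.I))
      (Complex.exp ((θ:ℂ) * Complex.I) * Complex.I) ((θ:ℂ)) := by
    have := ((hasDerivAt_id ((θ:ℂ))).mul_const Complex.I).cexp
    simpa using this
  exact h.comp_ofReal

lemma hasDerivAt_Lg (u : ℂ) (hu : ‖u‖ < 1) (θ : ℝ) :
    HasDerivAt (Lg u)
      (u * Complex.I * Complex.exp (-(θ:ℂ) * Complex.I) /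
        (1 - u * Complex.exp (-(θ:ℂ) * Complex.I))) θ := by
  have h1 : HasDerivAt (fun t : ℝ => 1 - u * Complex.exp (-(t:ℂ) * Complex.I))
      (u * Complex.I * Complex.exp (-(θ:ℂ) * Complex.I)) θ := by
    have := ((hasDerivAt_exp_neg θ).const_mul u).const_sub 1
    refine this.congr_deriv (Eq.symm ?_); ring
  exact h1.clog_real (hslit u hu θ)

lemma cont_Lg (u : ℂ) (hu : ‖u‖ < 1) : Continuous (Lg u) := by
  rw [continuous_iff_continuousAt]; intro θ
  have h1 : Continuous (fun t : ℝ => 1 - u * Complex.exp (-(t:ℂ) * Complex.I)) := by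
    fun_prop
  exact h1.continuousAt.clog (hslit u hu θ)

namespace SLZ3

lemma exp_per : Complex.exp (((2*π:ℝ):ℂ) * Complex.I) = 1 := by
  push_cast; exact Complex.exp_two_pi_mul_I

lemma exp_per' : Complex.exp (-((2*π:ℝ):ℂ) * Complex.I) = 1 := by
  rw [neg_mul, Complex.exp_neg, exp_per, inv_one]

lemma Tplus (u : ℂ) (hu : ‖u‖ < 1) :
    (∫ θ in (0:ℝ)..(2*π), Lg u θ * Complex.exp ((θ:ℂ) * Complex.I)) = -(2*π) * u := by
  set F : ℝ → ℂ := fun θ => Complex.I * (u - Complex.exp ((θ:ℂ) * Complex.I)) * Lg u θ with hF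
  have hderiv : ∀ θ : ℝ, HasDerivAt F (Lg u θ * Complex.exp ((θ:ℂ) * Complex.I) + u) θ := by
    intro θ
    have h1 : HasDerivAt (fun t : ℝ => Complex.I * (u - Complex.exp ((t:ℂ) * Complex.I)))
        (Complex.I * -(Complex.exp ((θ:ℂ) * Complex.I) * Complex.I)) θ :=
      ((hasDerivAt_exp_pos θ).const_sub u).const_mul Complex.I
    have h2 := (h1.mul (hasDerivAt_Lg u hu θ))
    refine h2.congr_deriv (Eq.symm ?_)
    have hn := hne u hu θ
    have hx : Complex.exp (-(θ:ℂ) * Complex.I) = (Complex.exp ((θ:ℂ) * Complex.I))⁻¹ := by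
      rw [← Complex.exp_neg]; ring_nf
    have hex : Complex.exp ((θ:ℂ) * Complex.I) ≠ 0 := Complex.exp_ne_zero _
    rw [hx] at hn ⊢
    have hd : Complex.exp ((θ:ℂ) * Complex.I) - u ≠ 0 := by
      intro h0
      apply hn
      rw [sub_eq_zero] at h0
      rw [← h0, mul_inv_cancel₀ hex, sub_self]
    field_simp
    ring_nf
    rw [Complex.I_sq]
    field_simp [hd]
    ring
  have hcont : Continuous fun θ : ℝ => Lg u θ * Complex.exp ((θ:ℂ) * Complex.I) + u := by
    refine ((cont_Lg u hu).mul (by fun_prop)).add continuous_const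
  have hFTC := integral_eq_sub_of_hasDerivAt (fun θ _ => hderiv θ)
    (hcont.intervalIntegrable 0 (2*π))
  have hper : F (2*π) = F 0 := by
    simp only [hF, Lg]
    rw [exp_per, exp_per']
    norm_num
  rw [hper, sub_self] at hFTC
  have hi1 : IntervalIntegrable (fun θ : ℝ => Lg u θ * Complex.exp ((θ:ℂ) * Complex.I))
      MeasureTheory.volume 0 (2*π) := ((cont_Lg u hu).mul (by fun_prop)).intervalIntegrable 0 (2*π)
  rw [integral_add hi1 intervalIntegrable_const, integral_const] at hFTC
  have hs : ((2*π - 0 : ℝ) • u) = ((2*π :ℝ):ℂ) * u := by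
    rw [sub_zero, Complex.real_smul]
  rw [hs] at hFTC
  push_cast at hFTC ⊢
  linear_combination hFTC


lemma hasDerivAt_Lg' (u : ℂ) (hu : ‖u‖ < 1) (θ : ℝ) :
    HasDerivAt (Lg u) (u * Complex.I / (Complex.exp ((θ:ℂ) * Complex.I) - u)) θ := by
  have h := hasDerivAt_Lg u hu θ
  have hn := hne u hu θ
  have hx : Complex.exp (-(θ:ℂ) * Complex.I) = (Complex.exp ((θ:ℂ) * Complex.I))⁻¹ := by
    rw [← Complex.exp_neg]; ring_nf
  have hex : Complex.exp ((θ:ℂ) * Complex.I) ≠ 0 := Complex.exp_ne_zero _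
  rw [hx] at hn
  have hd : Complex.exp ((θ:ℂ) * Complex.I) - u ≠ 0 := by
    intro h0
    apply hn
    rw [sub_eq_zero] at h0
    rw [← h0, mul_inv_cancel₀ hex, sub_self]
  convert h using 1
  rw [hx]
  rw [div_eq_div_iff hd hn]
  field_simp

lemma Tminus (u : ℂ) (hu : ‖u‖ < 1) :
    (∫ θ in (0:ℝ)..(2*π), Lg u θ * Complex.exp (-(θ:ℂ) * Complex.I)) = 0 := by
  rcases eq_or_ne u 0 with h | h
  · have : ∀ θ : ℝ, Lg u θ * Complex.exp (-(θ:ℂ) * Complex.I) = 0 := by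
      intro θ; simp [Lg, h]
    simp only [this, integral_zero]
  set F : ℝ → ℂ := fun θ =>
    Complex.I * u * Complex.exp (-(θ:ℂ) * Complex.I) * Lg u θ - Complex.I * Lg u θ
      - Complex.I * u * Complex.exp (-(θ:ℂ) * Complex.I) with hF
  have hderiv : ∀ θ : ℝ,
      HasDerivAt F (u * (Lg u θ * Complex.exp (-(θ:ℂ) * Complex.I))) θ := by
    intro θ
    have hL := hasDerivAt_Lg' u hu θ
    have h1 : HasDerivAt (fun t : ℝ => Complex.I * u * Complex.exp (-(t:ℂ) * Complex.I))
        (Complex.I * u * (Complex.exp (-(θ:ℂ) * Complex.I) * (-Complex.I))) θ :=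
      (hasDerivAt_exp_neg θ).const_mul (Complex.I * u)
    have h2 := ((h1.mul hL).sub (hL.const_mul Complex.I)).sub h1
    refine h2.congr_deriv (Eq.symm ?_)
    have hn := hne u hu θ
    have hx : Complex.exp (-(θ:ℂ) * Complex.I) = (Complex.exp ((θ:ℂ) * Complex.I))⁻¹ := by
      rw [← Complex.exp_neg]; ring_nf
    have hex : Complex.exp ((θ:ℂ) * Complex.I) ≠ 0 := Complex.exp_ne_zero _
    rw [hx] at hn
    have hd : Complex.exp ((θ:ℂ) * Complex.I) - u ≠ 0 := by
      intro h0
      apply hn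
      rw [sub_eq_zero] at h0
      rw [← h0, mul_inv_cancel₀ hex, sub_self]
    have hEe : Complex.exp (-(θ:ℂ) * Complex.I) * Complex.exp ((θ:ℂ) * Complex.I) = 1 := by
      have h9 : (-(θ:ℂ) * Complex.I + (θ:ℂ) * Complex.I) = 0 := by ring
      rw [← Complex.exp_add, h9, Complex.exp_zero]
    have hW : u * Complex.I / (Complex.exp ((θ:ℂ) * Complex.I) - u)
        * (Complex.exp ((θ:ℂ) * Complex.I) - u) = u * Complex.I := div_mul_cancel₀ _ hd
    linear_combination (u * Complex.exp (-(θ:ℂ) * Complex.I) * Lg u θ) * Complex.I_mul_I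
      + (-(Complex.I * (u * Complex.I / (Complex.exp ((θ:ℂ) * Complex.I) - u)))) * hEe
      + (Complex.I * Complex.exp (-(θ:ℂ) * Complex.I)) * hW
  have hcont : Continuous fun θ : ℝ => u * (Lg u θ * Complex.exp (-(θ:ℂ) * Complex.I)) := by
    exact continuous_const.mul ((cont_Lg u hu).mul (by fun_prop))
  have hFTC := integral_eq_sub_of_hasDerivAt (fun θ _ => hderiv θ)
    (hcont.intervalIntegrable 0 (2*π))
  have hper : F (2*π) = F 0 := by
    simp only [hF, Lg]
    rw [exp_per']
    norm_num
  rw [hper, sub_self, integral_const_mul] at hFTC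
  exact (mul_eq_zero.mp hFTC).resolve_left h


lemma Tpm_int (u : ℂ) (hu : ‖u‖ < 1) :
    IntervalIntegrable (fun θ : ℝ => Lg u θ * Complex.exp ((θ:ℂ) * Complex.I))
        MeasureTheory.volume 0 (2*π) ∧
    IntervalIntegrable (fun θ : ℝ => Lg u θ * Complex.exp (-(θ:ℂ) * Complex.I))
        MeasureTheory.volume 0 (2*π) :=
  ⟨((cont_Lg u hu).mul (by fun_prop)).intervalIntegrable 0 (2*π),
   ((cont_Lg u hu).mul (by fun_prop)).intervalIntegrable 0 (2*π)⟩

lemma Tcos' (u : ℂ) (hu : ‖u‖ < 1) :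
    (∫ θ in (0:ℝ)..(2*π), Lg u θ * ((Real.cos θ : ℝ) : ℂ)) = -(π : ℂ) * u := by
  have hpt : ∀ θ : ℝ, Lg u θ * ((Real.cos θ : ℝ) : ℂ)
      = (1/2 : ℂ) * (Lg u θ * Complex.exp ((θ:ℂ) * Complex.I))
        + (1/2 : ℂ) * (Lg u θ * Complex.exp (-(θ:ℂ) * Complex.I)) := by
    intro θ
    rw [Complex.ofReal_cos]
    have h2 := Complex.two_cos ((θ:ℂ))
    simp only [neg_mul] at h2 ⊢
    linear_combination (Lg u θ / 2) * h2
  rw [integral_congr (fun θ _ => hpt θ),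
    integral_add ((Tpm_int u hu).1.const_mul _) ((Tpm_int u hu).2.const_mul _),
    integral_const_mul, integral_const_mul, Tplus u hu, Tminus u hu]
  ring

lemma Tsin' (u : ℂ) (hu : ‖u‖ < 1) :
    (∫ θ in (0:ℝ)..(2*π), Lg u θ * ((Real.sin θ : ℝ) : ℂ)) = (π : ℂ) * Complex.I * u := by
  have hpt : ∀ θ : ℝ, Lg u θ * ((Real.sin θ : ℝ) : ℂ)
      = (Complex.I/2 : ℂ) * (Lg u θ * Complex.exp (-(θ:ℂ) * Complex.I))
        - (Complex.I/2 : ℂ) * (Lg u θ * Complex.exp ((θ:ℂ) * Complex.I)) := by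
    intro θ
    rw [Complex.ofReal_sin]
    have h2 := Complex.two_sin ((θ:ℂ))
    simp only [neg_mul] at h2 ⊢
    linear_combination (Lg u θ / 2) * h2
  rw [integral_congr (fun θ _ => hpt θ),
    integral_sub ((Tpm_int u hu).2.const_mul _) ((Tpm_int u hu).1.const_mul _),
    integral_const_mul, integral_const_mul, Tplus u hu, Tminus u hu]
  ring

lemma Tcos (u : ℂ) (hu : ‖u‖ < 1) :
    (∫ θ in (0:ℝ)..(2*π), (Lg u θ).re * Real.cos θ) = -π * u.re := by
  have hint : IntervalIntegrable (fun θ : ℝ => Lg u θ * ((Real.cos θ : ℝ) : ℂ))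
      MeasureTheory.volume 0 (2*π) := ((cont_Lg u hu).mul (by fun_prop)).intervalIntegrable 0 (2*π)
  have h1 := Complex.reCLM.intervalIntegral_comp_comm hint
  have h2 : ∀ θ : ℝ, Complex.reCLM (Lg u θ * ((Real.cos θ : ℝ) : ℂ)) = (Lg u θ).re * Real.cos θ := by
    intro θ
    simp [Complex.mul_re, Complex.cos_ofReal_re, Complex.sin_ofReal_re]
  rw [integral_congr (fun θ _ => (h2 θ).symm), h1, Tcos' u hu]
  simp

lemma Tsin (u : ℂ) (hu : ‖u‖ < 1) :
    (∫ θ in (0:ℝ)..(2*π), (Lg u θ).re * Real.sin θ) = -π * u.im := by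
  have hint : IntervalIntegrable (fun θ : ℝ => Lg u θ * ((Real.sin θ : ℝ) : ℂ))
      MeasureTheory.volume 0 (2*π) := ((cont_Lg u hu).mul (by fun_prop)).intervalIntegrable 0 (2*π)
  have h1 := Complex.reCLM.intervalIntegral_comp_comm hint
  have h2 : ∀ θ : ℝ, Complex.reCLM (Lg u θ * ((Real.sin θ : ℝ) : ℂ)) = (Lg u θ).re * Real.sin θ := by
    intro θ
    simp [Complex.mul_re, Complex.cos_ofReal_re, Complex.sin_ofReal_re]
  rw [integral_congr (fun θ _ => (h2 θ).symm), h1, Tsin' u hu]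
  simp

end SLZ3
end SLZ3
end

open Real intervalIntegral
open SLZ3 SLZ3.SLZ3

noncomputable section
namespace SLZ3B

variable (a b R : ℝ)

/-- the disk point as complex parameter -/
def uu (a b R : ℝ) : ℂ := ((a/R : ℝ) : ℂ) + ((b/R : ℝ) : ℂ) * Complex.I

lemma uu_re : (uu a b R).re = a / R := by simp [uu]
lemma uu_im : (uu a b R).im = b / R := by simp [uu]

lemma uu_abs (hR : 0 < R) (hlt : a^2 + b^2 < R^2) : ‖uu a b R‖ < 1 := by
  have h1 : ‖uu a b R‖ ^ 2 = (a/R)^2 + (b/R)^2 := by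
    rw [Complex.sq_norm, Complex.normSq_apply, uu_re, uu_im]; ring
  have h2 : (a/R)^2 + (b/R)^2 < 1 := by
    rw [div_pow, div_pow, ← add_div, div_lt_one (by positivity)]
    exact hlt
  nlinarith [norm_nonneg (uu a b R)]

lemma L_eq (hR : 0 < R) (hlt : a^2 + b^2 < R^2) (θ : ℝ) :
    Real.log (Real.sqrt ((a - R*Real.cos θ)^2 + (b - R*Real.sin θ)^2))
      = Real.log R + (Lg (uu a b R) θ).re := by
  have hu := uu_abs a b R hR hlt
  have hR0 : (R:ℂ) ≠ 0 := by exact_mod_cast hR.ne'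
  have hEe : Complex.exp ((θ:ℂ) * Complex.I) * Complex.exp (-(θ:ℂ) * Complex.I) = 1 := by
    have h9 : ((θ:ℂ) * Complex.I + -(θ:ℂ) * Complex.I) = 0 := by ring
    rw [← Complex.exp_add, h9, Complex.exp_zero]
  have hfac : ((a:ℂ) + (b:ℂ)*Complex.I) - (R:ℂ) * Complex.exp ((θ:ℂ) * Complex.I)
      = (-(R:ℂ) * Complex.exp ((θ:ℂ) * Complex.I))
        * (1 - uu a b R * Complex.exp (-(θ:ℂ) * Complex.I)) := by
    have expand : (-(R:ℂ) * Complex.exp ((θ:ℂ) * Complex.I))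
        * (1 - uu a b R * Complex.exp (-(θ:ℂ) * Complex.I))
        = -(R:ℂ) * Complex.exp ((θ:ℂ) * Complex.I)
          + (R:ℂ) * uu a b R
            * (Complex.exp ((θ:ℂ) * Complex.I) * Complex.exp (-(θ:ℂ) * Complex.I)) := by
      ring
    rw [expand, hEe, mul_one]
    have : (R:ℂ) * uu a b R = (a:ℂ) + (b:ℂ)*Complex.I := by
      rw [uu]
      push_cast
      field_simp
    rw [this]
    ring
  have habs1 : Real.sqrt ((a - R*Real.cos θ)^2 + (b - R*Real.sin θ)^2)
      = ‖((a:ℂ) + (b:ℂ)*Complex.I) - (R:ℂ) * Complex.exp ((θ:ℂ) * Complex.I)‖ := by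
    rw [Complex.norm_def, Complex.normSq_apply]
    congr 1
    simp [Complex.exp_ofReal_mul_I_re, Complex.exp_ofReal_mul_I_im]
    ring
  have habs2 : ‖((a:ℂ) + (b:ℂ)*Complex.I) - (R:ℂ) * Complex.exp ((θ:ℂ) * Complex.I)‖
      = R * ‖1 - uu a b R * Complex.exp (-(θ:ℂ) * Complex.I)‖ := by
    rw [hfac, norm_mul, norm_mul]
    have h6 : ‖-(R:ℂ)‖ = R := by
      rw [norm_neg, Complex.norm_real, Real.norm_eq_abs, abs_of_pos hR]
    rw [h6, Complex.norm_exp_ofReal_mul_I, mul_one]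
  rw [habs1, habs2, Real.log_mul hR.ne' (norm_ne_zero_iff.mpr (hne _ hu θ))]
  congr 1
  rw [Lg, Complex.log_re]

lemma cont_D : Continuous (fun θ : ℝ => (a - R*Real.cos θ)^2 + (b - R*Real.sin θ)^2) := by
  fun_prop

lemma D_pos (hlt : a^2 + b^2 < R^2) (θ : ℝ) :
    0 < (a - R*Real.cos θ)^2 + (b - R*Real.sin θ)^2 := by
  by_contra h
  push_neg at h
  have h1 : a - R*Real.cos θ = 0 := by nlinarith [sq_nonneg (a - R*Real.cos θ), sq_nonneg (b - R*Real.sin θ)]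
  have h2 : b - R*Real.sin θ = 0 := by nlinarith [sq_nonneg (a - R*Real.cos θ), sq_nonneg (b - R*Real.sin θ)]
  have h3 : a = R*Real.cos θ := by linarith
  have h4 : b = R*Real.sin θ := by linarith
  have h5 := Real.sin_sq_add_cos_sq θ
  have h6 : a^2 + b^2 = R^2 := by
    rw [h3, h4]
    linear_combination R^2 * h5
  linarith

lemma cont_L (hlt : a^2 + b^2 < R^2) :
    Continuous (fun θ : ℝ => Real.log (Real.sqrt ((a - R*Real.cos θ)^2 + (b - R*Real.sin θ)^2))) :=
  ((cont_D a b R).sqrt).log (fun θ => (Real.sqrt_pos.mpr (D_pos a b R hlt θ)).ne')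

lemma Icos (hR : 0 < R) (hlt : a^2 + b^2 < R^2) :
    (∫ θ in (0:ℝ)..(2*π), Real.log (Real.sqrt ((a - R*Real.cos θ)^2 + (b - R*Real.sin θ)^2))
        * Real.cos θ) = -π * a / R := by
  have hu := uu_abs a b R hR hlt
  have hpt : ∀ θ : ℝ, Real.log (Real.sqrt ((a - R*Real.cos θ)^2 + (b - R*Real.sin θ)^2)) * Real.cos θ
      = Real.log R * Real.cos θ + (Lg (uu a b R) θ).re * Real.cos θ := by
    intro θ; rw [L_eq a b R hR hlt θ]; ring
  rw [integral_congr (fun θ _ => hpt θ)]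
  have hi1 : IntervalIntegrable (fun θ : ℝ => Real.log R * Real.cos θ) MeasureTheory.volume 0 (2*π) :=
    (continuous_const.mul Real.continuous_cos).intervalIntegrable 0 (2*π)
  have hi2 : IntervalIntegrable (fun θ : ℝ => (Lg (uu a b R) θ).re * Real.cos θ)
      MeasureTheory.volume 0 (2*π) :=
    ((Complex.continuous_re.comp (cont_Lg _ hu)).mul Real.continuous_cos).intervalIntegrable 0 (2*π)
  rw [integral_add hi1 hi2, integral_const_mul, integral_cos, Tcos _ hu, uu_re]
  rw [Real.sin_zero, Real.sin_two_pi]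
  field_simp
  ring

lemma Isin (hR : 0 < R) (hlt : a^2 + b^2 < R^2) :
    (∫ θ in (0:ℝ)..(2*π), Real.log (Real.sqrt ((a - R*Real.cos θ)^2 + (b - R*Real.sin θ)^2))
        * Real.sin θ) = -π * b / R := by
  have hu := uu_abs a b R hR hlt
  have hpt : ∀ θ : ℝ, Real.log (Real.sqrt ((a - R*Real.cos θ)^2 + (b - R*Real.sin θ)^2)) * Real.sin θ
      = Real.log R * Real.sin θ + (Lg (uu a b R) θ).re * Real.sin θ := by
    intro θ; rw [L_eq a b R hR hlt θ]; ring
  rw [integral_congr (fun θ _ => hpt θ)]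
  have hi1 : IntervalIntegrable (fun θ : ℝ => Real.log R * Real.sin θ) MeasureTheory.volume 0 (2*π) :=
    (continuous_const.mul Real.continuous_sin).intervalIntegrable 0 (2*π)
  have hi2 : IntervalIntegrable (fun θ : ℝ => (Lg (uu a b R) θ).re * Real.sin θ)
      MeasureTheory.volume 0 (2*π) :=
    ((Complex.continuous_re.comp (cont_Lg _ hu)).mul Real.continuous_sin).intervalIntegrable 0 (2*π)
  rw [integral_add hi1 hi2, integral_const_mul, integral_sin, Tsin _ hu, uu_im]
  rw [Real.cos_zero, Real.cos_two_pi]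
  field_simp
  ring


lemma hasDerivAt_z1 (θ : ℝ) :
    HasDerivAt (fun θ : ℝ => a - R*Real.cos θ) (R * Real.sin θ) θ := by
  have h := ((Real.hasDerivAt_cos θ).const_mul R).const_sub a
  refine h.congr_deriv (Eq.symm ?_)
  ring

lemma hasDerivAt_z2 (θ : ℝ) :
    HasDerivAt (fun θ : ℝ => b - R*Real.sin θ) (-(R * Real.cos θ)) θ := by
  exact ((Real.hasDerivAt_sin θ).const_mul R).const_sub b

lemma hasDerivAt_D (θ : ℝ) :
    HasDerivAt (fun θ : ℝ => (a - R*Real.cos θ)^2 + (b - R*Real.sin θ)^2)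
      (2*R*(a*Real.sin θ - b*Real.cos θ)) θ := by
  have h := ((hasDerivAt_z1 a R θ).pow 2).add ((hasDerivAt_z2 b R θ).pow 2)
  refine h.congr_deriv (Eq.symm ?_)
  ring

lemma J1 (hR : 0 < R) (hlt : a^2 + b^2 < R^2) :
    (∫ θ in (0:ℝ)..(2*π), (a*Real.sin θ - b*Real.cos θ) * (a - R*Real.cos θ)
        / ((a - R*Real.cos θ)^2 + (b - R*Real.sin θ)^2)) = π * b / R := by
  set D : ℝ → ℝ := fun θ => (a - R*Real.cos θ)^2 + (b - R*Real.sin θ)^2 with hD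
  have hq : ∀ θ : ℝ, HasDerivAt (fun θ : ℝ => Real.log (D θ) * (a - R*Real.cos θ))
      (2*R*((a*Real.sin θ - b*Real.cos θ) * (a - R*Real.cos θ) / D θ)
        + Real.log (D θ) * (R * Real.sin θ)) θ := by
    intro θ
    have h1 := ((hasDerivAt_D a b R θ).log (D_pos a b R hlt θ).ne').mul (hasDerivAt_z1 a R θ)
    refine h1.congr_deriv (Eq.symm ?_)
    field_simp
    ring
  have hcontQ : Continuous (fun θ : ℝ =>
      (a*Real.sin θ - b*Real.cos θ) * (a - R*Real.cos θ) / D θ) := by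
    apply Continuous.div (by fun_prop) (cont_D a b R)
    exact fun θ => (D_pos a b R hlt θ).ne'
  have hcontL2 : Continuous (fun θ : ℝ => Real.log (D θ) * (R * Real.sin θ)) := by
    apply Continuous.mul _ (by fun_prop)
    exact (cont_D a b R).log (fun θ => (D_pos a b R hlt θ).ne')
  have hFTC := integral_eq_sub_of_hasDerivAt (fun θ _ => hq θ)
    (((continuous_const.mul hcontQ).add hcontL2).intervalIntegrable 0 (2*π))
  have hper : Real.log (D (2*π)) * (a - R*Real.cos (2*π)) - Real.log (D 0) * (a - R*Real.cos 0) = 0 := by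
    simp [hD, Real.cos_two_pi, Real.sin_two_pi]
  rw [hper] at hFTC
  rw [integral_add ((hcontQ.intervalIntegrable 0 (2*π)).const_mul _)
    (hcontL2.intervalIntegrable 0 (2*π)), integral_const_mul] at hFTC
  have hlog2 : (∫ θ in (0:ℝ)..(2*π), Real.log (D θ) * (R * Real.sin θ)) = -2*π*b := by
    have hpt : ∀ θ : ℝ, Real.log (D θ) * (R * Real.sin θ)
        = (2*R) * (Real.log (Real.sqrt (D θ)) * Real.sin θ) := by
      intro θ
      rw [Real.log_sqrt (by positivity)]
      ring
    rw [integral_congr (fun θ _ => hpt θ), integral_const_mul, hD]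
    rw [Isin a b R hR hlt]
    field_simp
  rw [hlog2] at hFTC
  have hR' : R ≠ 0 := hR.ne'
  field_simp at hFTC ⊢
  linarith

lemma J2 (hR : 0 < R) (hlt : a^2 + b^2 < R^2) :
    (∫ θ in (0:ℝ)..(2*π), (a*Real.sin θ - b*Real.cos θ) * (b - R*Real.sin θ)
        / ((a - R*Real.cos θ)^2 + (b - R*Real.sin θ)^2)) = -π * a / R := by
  set D : ℝ → ℝ := fun θ => (a - R*Real.cos θ)^2 + (b - R*Real.sin θ)^2 with hD
  have hq : ∀ θ : ℝ, HasDerivAt (fun θ : ℝ => Real.log (D θ) * (b - R*Real.sin θ))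
      (2*R*((a*Real.sin θ - b*Real.cos θ) * (b - R*Real.sin θ) / D θ)
        + Real.log (D θ) * (-(R * Real.cos θ))) θ := by
    intro θ
    have h1 := ((hasDerivAt_D a b R θ).log (D_pos a b R hlt θ).ne').mul (hasDerivAt_z2 b R θ)
    refine h1.congr_deriv (Eq.symm ?_)
    field_simp
    ring
  have hcontQ : Continuous (fun θ : ℝ =>
      (a*Real.sin θ - b*Real.cos θ) * (b - R*Real.sin θ) / D θ) := by
    apply Continuous.div (by fun_prop) (cont_D a b R)
    exact fun θ => (D_pos a b R hlt θ).ne'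
  have hcontL2 : Continuous (fun θ : ℝ => Real.log (D θ) * (-(R * Real.cos θ))) := by
    apply Continuous.mul _ (by fun_prop)
    exact (cont_D a b R).log (fun θ => (D_pos a b R hlt θ).ne')
  have hFTC := integral_eq_sub_of_hasDerivAt (fun θ _ => hq θ)
    (((continuous_const.mul hcontQ).add hcontL2).intervalIntegrable 0 (2*π))
  have hper : Real.log (D (2*π)) * (b - R*Real.sin (2*π)) - Real.log (D 0) * (b - R*Real.sin 0) = 0 := by
    simp [hD, Real.cos_two_pi, Real.sin_two_pi]
  rw [hper] at hFTC
  rw [integral_add ((hcontQ.intervalIntegrable 0 (2*π)).const_mul _)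
    (hcontL2.intervalIntegrable 0 (2*π)), integral_const_mul] at hFTC
  have hlog2 : (∫ θ in (0:ℝ)..(2*π), Real.log (D θ) * (-(R * Real.cos θ))) = 2*π*a := by
    have hpt : ∀ θ : ℝ, Real.log (D θ) * (-(R * Real.cos θ))
        = (-(2*R)) * (Real.log (Real.sqrt (D θ)) * Real.cos θ) := by
      intro θ
      rw [Real.log_sqrt (by positivity)]
      ring
    rw [integral_congr (fun θ _ => hpt θ), integral_const_mul, hD]
    rw [Icos a b R hR hlt]
    field_simp
  rw [hlog2] at hFTC
  have hR' : R ≠ 0 := hR.ne'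
  field_simp at hFTC ⊢
  linarith

end SLZ3B
end

open Real intervalIntegral
open SLZ3 SLZ3.SLZ3 SLZ3B

/-- Single layer potential of the Kelvin matrix `Γ` applied to `ζ₃` on the circle of radius `R`:
for `x` in the open disk, `S_{∂D}[ζ₃](x) = -(R/(2μ)) ζ₃(x)`.  Here
`Γ(z)v = α₁ ln|z| v - α₂ ((z·v)/|z|²) z`, `ζ₃(y) = (1/(2πR³)) (y₂,-y₁)ᵀ`, the circle is
parametrized by `y = (R cos θ, R sin θ)` and `ds = R dθ`. -/
theorem single_layer_zeta3 (l m R : ℝ) (hm : 0 < m) (h2 : 0 < 2 * m + l) (hR : 0 < R)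
    (x : ℝ × ℝ) (hx : Real.sqrt (x.1 ^ 2 + x.2 ^ 2) < R) :
    let α₁ : ℝ := (1 / (4 * π)) * (1 / m + 1 / (2 * m + l))
    let α₂ : ℝ := (1 / (4 * π)) * (1 / m - 1 / (2 * m + l))
    let z₁ : ℝ → ℝ := fun θ => x.1 - R * Real.cos θ
    let z₂ : ℝ → ℝ := fun θ => x.2 - R * Real.sin θ
    let v₁ : ℝ → ℝ := fun θ => (1 / (2 * π * R ^ 3)) * (R * Real.sin θ)
    let v₂ : ℝ → ℝ := fun θ => (1 / (2 * π * R ^ 3)) * (-(R * Real.cos θ))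
    (∫ θ in (0:ℝ)..(2 * π),
        (α₁ * Real.log (Real.sqrt (z₁ θ ^ 2 + z₂ θ ^ 2)) * v₁ θ
          - α₂ * ((z₁ θ * v₁ θ + z₂ θ * v₂ θ) / (z₁ θ ^ 2 + z₂ θ ^ 2)) * z₁ θ) * R)
      = -(R / (2 * m)) * ((1 / (2 * π * R ^ 3)) * x.2) ∧
    (∫ θ in (0:ℝ)..(2 * π),
        (α₁ * Real.log (Real.sqrt (z₁ θ ^ 2 + z₂ θ ^ 2)) * v₂ θ
          - α₂ * ((z₁ θ * v₁ θ + z₂ θ * v₂ θ) / (z₁ θ ^ 2 + z₂ θ ^ 2)) * z₂ θ) * R)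
      = -(R / (2 * m)) * ((1 / (2 * π * R ^ 3)) * (-x.1)) := by
  intro α₁ α₂ z₁ z₂ v₁ v₂
  have hlt : x.1 ^ 2 + x.2 ^ 2 < R ^ 2 := by
    have h0 : (0:ℝ) ≤ x.1 ^ 2 + x.2 ^ 2 := by positivity
    have h1 := Real.sq_sqrt h0
    nlinarith [Real.sqrt_nonneg (x.1 ^ 2 + x.2 ^ 2)]
  have hπ : π ≠ 0 := Real.pi_ne_zero
  have hπpos := Real.pi_pos
  set a := x.1
  set b := x.2
  set A1 : ℝ := α₁ * (1 / (2 * π * R ^ 3)) * R ^ 2 with hA1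
  set A2 : ℝ := α₂ * (1 / (2 * π * R ^ 3)) * R ^ 2 with hA2
  have hcL : Continuous (fun θ : ℝ =>
      Real.log (Real.sqrt ((a - R*Real.cos θ)^2 + (b - R*Real.sin θ)^2))) :=
    cont_L a b R hlt
  have hcQ1 : Continuous (fun θ : ℝ =>
      (a*Real.sin θ - b*Real.cos θ) * (a - R*Real.cos θ)
        / ((a - R*Real.cos θ)^2 + (b - R*Real.sin θ)^2)) := by
    apply Continuous.div (by fun_prop) (cont_D a b R)
    exact fun θ => (D_pos a b R hlt θ).ne'
  have hcQ2 : Continuous (fun θ : ℝ =>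
      (a*Real.sin θ - b*Real.cos θ) * (b - R*Real.sin θ)
        / ((a - R*Real.cos θ)^2 + (b - R*Real.sin θ)^2)) := by
    apply Continuous.div (by fun_prop) (cont_D a b R)
    exact fun θ => (D_pos a b R hlt θ).ne'
  constructor
  · have hpt : ∀ θ : ℝ,
        (α₁ * Real.log (Real.sqrt (z₁ θ ^ 2 + z₂ θ ^ 2)) * v₁ θ
          - α₂ * ((z₁ θ * v₁ θ + z₂ θ * v₂ θ) / (z₁ θ ^ 2 + z₂ θ ^ 2)) * z₁ θ) * R
        = A1 * (Real.log (Real.sqrt ((a - R*Real.cos θ)^2 + (b - R*Real.sin θ)^2)) * Real.sin θ)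
          - A2 * ((a*Real.sin θ - b*Real.cos θ) * (a - R*Real.cos θ)
              / ((a - R*Real.cos θ)^2 + (b - R*Real.sin θ)^2)) := by
      intro θ
      simp only [z₁, z₂, v₁, v₂, hA1, hA2]
      have hnum : (a - R * Real.cos θ) * ((1 / (2 * π * R ^ 3)) * (R * Real.sin θ))
          + (b - R * Real.sin θ) * ((1 / (2 * π * R ^ 3)) * (-(R * Real.cos θ)))
          = (1 / (2 * π * R ^ 3)) * R * (a*Real.sin θ - b*Real.cos θ) := by ring
      rw [hnum]
      ring
    rw [integral_congr (fun θ _ => hpt θ),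
      integral_sub (((show Continuous (fun θ : ℝ => Real.log (Real.sqrt ((a - R*Real.cos θ)^2 + (b - R*Real.sin θ)^2)) * Real.sin θ) from hcL.mul Real.continuous_sin).intervalIntegrable 0 (2*π)).const_mul _)
        ((hcQ1.intervalIntegrable 0 (2*π)).const_mul _),
      integral_const_mul, integral_const_mul,
      Isin a b R hR hlt, J1 a b R hR hlt]
    simp only [hA1, hA2, α₁, α₂]
    have hml : m ≠ 0 := hm.ne'
    have h2l : 2*m + l ≠ 0 := h2.ne'
    field_simp
    ring
  · have hpt : ∀ θ : ℝ,
        (α₁ * Real.log (Real.sqrt (z₁ θ ^ 2 + z₂ θ ^ 2)) * v₂ θ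
          - α₂ * ((z₁ θ * v₁ θ + z₂ θ * v₂ θ) / (z₁ θ ^ 2 + z₂ θ ^ 2)) * z₂ θ) * R
        = (-A1) * (Real.log (Real.sqrt ((a - R*Real.cos θ)^2 + (b - R*Real.sin θ)^2)) * Real.cos θ)
          - A2 * ((a*Real.sin θ - b*Real.cos θ) * (b - R*Real.sin θ)
              / ((a - R*Real.cos θ)^2 + (b - R*Real.sin θ)^2)) := by
      intro θ
      simp only [z₁, z₂, v₁, v₂, hA1, hA2]
      have hnum : (a - R * Real.cos θ) * ((1 / (2 * π * R ^ 3)) * (R * Real.sin θ))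
          + (b - R * Real.sin θ) * ((1 / (2 * π * R ^ 3)) * (-(R * Real.cos θ)))
          = (1 / (2 * π * R ^ 3)) * R * (a*Real.sin θ - b*Real.cos θ) := by ring
      rw [hnum]
      ring
    rw [integral_congr (fun θ _ => hpt θ),
      integral_sub (((show Continuous (fun θ : ℝ => Real.log (Real.sqrt ((a - R*Real.cos θ)^2 + (b - R*Real.sin θ)^2)) * Real.cos θ) from hcL.mul Real.continuous_cos).intervalIntegrable 0 (2*π)).const_mul _)
        ((hcQ2.intervalIntegrable 0 (2*π)).const_mul _),
      integral_const_mul, integral_const_mul,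
      Icos a b R hR hlt, J2 a b R hR hlt]
    simp only [hA1, hA2, α₁, α₂]
    have hml : m ≠ 0 := hm.ne'
    have h2l : 2*m + l ≠ 0 := h2.ne'
    field_simp
    ring
end
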